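/- arXiv:2407.20217 — 5 statements merged into one kernel-verified Lean document; each statement's English description precedes it below -/
import Mathlib

section
/- If G ∈ G_{n,n+k} with n ≥ 2 and k ≥ 0 has a bridge, then there exists a graph G′ ∈ G_{n,n+k} such that d_i(G′) < d_i(G) for every i ∈ {1, …, k+1}. Consequently, for every p ∈ (0,1), any p-optimal (n,n+k)-graph is bridgeless. -/
open Classical Finset

noncomputable section

/-- A finite multigraph: edges carry two (possibly equal) endpoints. -/
structure Multigraph where
  V : Type
  E : Type
  [fintV : Fintype V]
  [fintE : Fintype E]
  src : E → V
  tgt : E → V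

attribute [instance] Multigraph.fintV Multigraph.fintE

namespace Multigraph

variable (G : Multigraph)

/-- Number of vertices. -/
def nV : ℕ := Fintype.card G.V

/-- Number of edges (with multiplicity). -/
def nE : ℕ := Fintype.card G.E

/-- One step along an edge belonging to the edge set `S`. -/
def stepOn (S : Finset G.E) (u v : G.V) : Prop :=
  ∃ e ∈ S, (G.src e = u ∧ G.tgt e = v) ∨ (G.src e = v ∧ G.tgt e = u)

/-- The spanning subgraph with edge set `S` is connected. -/
def ConnOn (S : Finset G.E) : Prop :=
  ∀ u v : G.V, Relation.ReflTransGen (G.stepOn S) u v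

/-- `G` is connected. -/
def Connected : Prop := G.ConnOn Finset.univ

/-- The edge set `F` disconnects `G` (i.e. is a disconnection). -/
def Disconnects (F : Finset G.E) : Prop := ¬ G.ConnOn (Finset.univ \ F)

/-- `d i G`: the number of `i`-disconnections of `G`. -/
def d (i : ℕ) : ℕ :=
  ((Finset.univ : Finset (Finset G.E)).filter fun F => F.card = i ∧ G.Disconnects F).card

/-- The all-terminal reliability `R(G,p)`: each edge is independently retained with
probability `p`; this is the probability that the retained spanning subgraph is connected. -/
def rel (p : ℝ) : ℝ :=
  ∑ S : Finset G.E, if G.ConnOn S then p ^ S.card * (1 - p) ^ (G.nE - S.card) else 0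

/-- `e` is a bridge. -/
def IsBridge (e : G.E) : Prop := G.Disconnects {e}

def Bridgeless : Prop := ∀ e : G.E, ¬ G.IsBridge e

/-- The number of spanning trees of `G` (connected spanning subgraphs with `nV - 1` edges). -/
def treeCount : ℕ :=
  ((Finset.univ : Finset (Finset G.E)).filter fun S => S.card + 1 = G.nV ∧ G.ConnOn S).card

/-- The edge-connectivity: the least size of a disconnecting set of edges. -/
def edgeConnectivity : ℕ :=
  sInf {i : ℕ | ∃ F : Finset G.E, F.card = i ∧ G.Disconnects F}

/-- Degree of a vertex (a loop counts twice). -/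
def deg (v : G.V) : ℕ :=
  (Finset.univ.filter fun e => G.src e = v).card +
    (Finset.univ.filter fun e => G.tgt e = v).card

/-- The edges crossing the vertex set `A`. -/
def cutEdges (A : Finset G.V) : Finset G.E :=
  Finset.univ.filter fun e =>
    (G.src e ∈ A ∧ G.tgt e ∉ A) ∨ (G.src e ∉ A ∧ G.tgt e ∈ A)

/-- `F` is a cut: the set of edges crossing a nontrivial bipartition of the vertices. -/
def IsCut (F : Finset G.E) : Prop :=
  ∃ A : Finset G.V, A.Nonempty ∧ A ≠ Finset.univ ∧ F = G.cutEdges A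

/-- `F` is a bond: a minimal cut. -/
def IsBond (F : Finset G.E) : Prop :=
  G.IsCut F ∧ ∀ F' ⊆ F, G.IsCut F' → F' = F

/-- Number of `s`-bonds of `G`. -/
def bondCount (s : ℕ) : ℕ :=
  ((Finset.univ : Finset (Finset G.E)).filter fun F => F.card = s ∧ G.IsBond F).card

/-- Adjacency of vertices. -/
def Adj (u v : G.V) : Prop :=
  ∃ e : G.E, (G.src e = u ∧ G.tgt e = v) ∨ (G.src e = v ∧ G.tgt e = u)

/-- `G` is simple: no loops and no parallel edges. -/
def IsSimple : Prop :=
  (∀ e : G.E, G.src e ≠ G.tgt e) ∧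
    ∀ e f : G.E,
      ((G.src e = G.src f ∧ G.tgt e = G.tgt f) ∨ (G.src e = G.tgt f ∧ G.tgt e = G.src f)) →
        e = f

end Multigraph

/-- `G ∈ 𝒢_{n,m}`: connected with `n` vertices and `m` edges. -/
def memG (G : Multigraph) (n m : ℕ) : Prop :=
  G.nV = n ∧ G.nE = m ∧ G.Connected

/-- Isomorphism of multigraphs. -/
structure MGIso (G H : Multigraph) where
  vMap : G.V ≃ H.V
  eMap : G.E ≃ H.E
  ends_eq : ∀ e : G.E,
    (H.src (eMap e) = vMap (G.src e) ∧ H.tgt (eMap e) = vMap (G.tgt e)) ∨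
    (H.src (eMap e) = vMap (G.tgt e) ∧ H.tgt (eMap e) = vMap (G.src e))

def IsIso (G H : Multigraph) : Prop := Nonempty (MGIso G H)

/-- `G` is `p`-optimal in `𝒢_{n,m}`. -/
def pOptimal (G : Multigraph) (n m : ℕ) (p : ℝ) : Prop :=
  memG G n m ∧ ∀ H : Multigraph, memG H n m → H.rel p ≤ G.rel p

/-- `G` is uniquely optimal in `𝒢_{n,m}`: strictly more reliable than every
non-isomorphic member, for every `p ∈ (0,1)`. -/
def UniquelyOptimal (G : Multigraph) (n m : ℕ) : Prop :=
  memG G n m ∧ ∀ H : Multigraph, memG H n m → ¬ IsIso G H →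
    ∀ p : ℝ, 0 < p → p < 1 → H.rel p < G.rel p

noncomputable instance quotFintype {α : Type} [Fintype α] {r : α → α → Prop} :
    Fintype (Quot r) :=
  letI := Classical.decEq (Quot r)
  Fintype.ofSurjective (Quot.mk r) fun q => Quot.exists_rep q

/-- Identification of the endpoints of zero-weight edges. -/
def zeroRel (D : Multigraph) (w : D.E → ℕ) : D.V → D.V → Prop :=
  fun u v => ∃ e : D.E, w e = 0 ∧ D.src e = u ∧ D.tgt e = v

/-- The `j`-th node along the chain replacing the edge `e` (whose chain has `w e` edges). -/
def chainNode (D : Multigraph) (w : D.E → ℕ) (e : D.E) (j : ℕ) :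
    Quot (zeroRel D w) ⊕ (Σ f : D.E, Fin (w f - 1)) :=
  if h : 0 < j ∧ j < w e then Sum.inr ⟨e, ⟨j - 1, by omega⟩⟩
  else if j = 0 then Sum.inl (Quot.mk _ (D.src e))
  else Sum.inl (Quot.mk _ (D.tgt e))

/-- The weak subdivision of `D` determined by the chain lengths `w`: each edge `e` is
replaced by a chain with `w e` edges; zero-weight edges are contracted. -/
def subdivide (D : Multigraph) (w : D.E → ℕ) : Multigraph where
  V := Quot (zeroRel D w) ⊕ (Σ f : D.E, Fin (w f - 1))
  E := Σ f : D.E, Fin (w f)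
  src f := chainNode D w f.1 f.2.val
  tgt f := chainNode D w f.1 (f.2.val + 1)

/-- The zero-weight edges contain no cycle (no "zero cycle"): they form a forest. -/
def ZeroAcyclic (D : Multigraph) (w : D.E → ℕ) : Prop :=
  Fintype.card (Quot (zeroRel D w)) +
      (Finset.univ.filter fun e : D.E => w e = 0).card = Fintype.card D.V

/-- `G` is a weak subdivision of `D` with chain lengths `w`. -/
def IsWeakSubdivision (G D : Multigraph) (w : D.E → ℕ) : Prop :=
  ZeroAcyclic D w ∧ IsIso G (subdivide D w)

/-- `D` is a weak distillation of `G`. -/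
def IsWeakDistillation (D G : Multigraph) : Prop :=
  ∃ w : D.E → ℕ, IsWeakSubdivision G D w

/-- The chain lengths differ pairwise by at most one. -/
def BalancedWeights {E : Type} (w : E → ℕ) : Prop := ∀ e f : E, w e ≤ w f + 1

/-- `D ∈ 𝒟_k`: connected, cubic, 3-edge-connected, of exceedance `k`. -/
def memDk (k : ℕ) (D : Multigraph) : Prop :=
  D.Connected ∧ (∀ v : D.V, D.deg v = 3) ∧
    (∀ F : Finset D.E, D.Disconnects F → 3 ≤ F.card) ∧ D.nE = D.nV + k

/-- Identification of the two endpoints of the edge `e`. -/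
def contractRel (G : Multigraph) (e : G.E) : G.V → G.V → Prop :=
  fun u v => u = G.src e ∧ v = G.tgt e

/-- Contraction of the edge `e`. -/
def Multigraph.contract (G : Multigraph) (e : G.E) : Multigraph :=
  letI := Classical.decEq G.E
  { V := Quot (contractRel G e)
    E := {f : G.E // f ≠ e}
    src := fun f => Quot.mk _ (G.src f.1)
    tgt := fun f => Quot.mk _ (G.tgt f.1) }

/-- `G'` is obtained from `G` by shifting an edge: in an intermediate graph `H`
(the expansion of `G` at a vertex by the new edge `e'`), the edges `e, e'` form a
2-bond; contracting `e'` gives back `G`, while contracting `e` gives `G'`. -/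
def IsShiftOf (G G' : Multigraph) : Prop :=
  ∃ (H : Multigraph) (e e' : H.E), e ≠ e' ∧
    H.src e ≠ H.tgt e ∧ H.src e' ≠ H.tgt e' ∧
    H.IsBond {e, e'} ∧
    IsIso (H.contract e') G ∧ IsIso (H.contract e) G'

/-- Equivalence of graphs: repeated edge shifting. -/
def EquivalentGraphs (G G' : Multigraph) : Prop :=
  Relation.ReflTransGen IsShiftOf G G'

/-- `G'` is obtained from `G` by moving the (non-loop) edge `e`: contracting `e` and
expanding a new edge, identified with `e` via `φ`, at an arbitrary vertex.
Equivalently, `G/e` and `G'/φ e` agree, compatibly with the edge identification `φ`. -/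
def MovedEdge (G G' : Multigraph) (φ : G.E ≃ G'.E) (e : G.E) : Prop :=
  G.src e ≠ G.tgt e ∧ G'.src (φ e) ≠ G'.tgt (φ e) ∧
  ∃ ψ : Quot (contractRel G e) ≃ Quot (contractRel G' (φ e)),
    ∀ f : G.E, f ≠ e →
      ((ψ (Quot.mk _ (G.src f)) = Quot.mk _ (G'.src (φ f)) ∧
        ψ (Quot.mk _ (G.tgt f)) = Quot.mk _ (G'.tgt (φ f))) ∨
       (ψ (Quot.mk _ (G.src f)) = Quot.mk _ (G'.tgt (φ f)) ∧
        ψ (Quot.mk _ (G.tgt f)) = Quot.mk _ (G'.src (φ f))))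

/-- Move one edge from the chain `a` to the chain `b`. -/
def moveWeight {E : Type} (w : E → ℕ) (a b : E) : E → ℕ :=
  fun g => if g = b then w b + 1 else if g = a then w a - 1 else w g

/-- The chains of maximal length. -/
def maxChains (D : Multigraph) (w : D.E → ℕ) : Finset D.E :=
  Finset.univ.filter fun e => ∀ f : D.E, w f ≤ w e

/-- The chains of minimal length. -/
def minChains (D : Multigraph) (w : D.E → ℕ) : Finset D.E :=
  Finset.univ.filter fun e => ∀ f : D.E, w e ≤ w f

/-- Degree of `v` within the edge set `S`. -/
def degIn (D : Multigraph) (S : Finset D.E) (v : D.V) : ℕ :=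
  (S.filter fun e => D.src e = v).card + (S.filter fun e => D.tgt e = v).card

/-- `S` is a matching (pairwise non-adjacent edges). -/
def IsMatchingIn (D : Multigraph) (S : Finset D.E) : Prop := ∀ v : D.V, degIn D S v ≤ 1

/-- `S` is a path with three edges. -/
def IsPath3In (D : Multigraph) (S : Finset D.E) : Prop :=
  S.card = 3 ∧ (∀ v : D.V, degIn D S v ≤ 2) ∧
    (Finset.univ.filter fun v : D.V => degIn D S v = 1).card = 2

/-- `S` is the disjoint union of a path with three edges and a single edge. -/
def IsPath3PlusEdgeIn (D : Multigraph) (S : Finset D.E) : Prop :=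
  S.card = 4 ∧ (∀ v : D.V, degIn D S v ≤ 2) ∧
    (Finset.univ.filter fun v : D.V => degIn D S v = 1).card = 4 ∧
    ∃ e ∈ S, degIn D S (D.src e) = 2 ∧ degIn D S (D.tgt e) = 2

/-- `S` is the disjoint union of two paths with two edges each. -/
def IsTwoPlusTwoIn (D : Multigraph) (S : Finset D.E) : Prop :=
  S.card = 4 ∧ (∀ v : D.V, degIn D S v ≤ 2) ∧
    (Finset.univ.filter fun v : D.V => degIn D S v = 1).card = 4 ∧
    ∀ e ∈ S, degIn D S (D.src e) = 1 ∨ degIn D S (D.tgt e) = 1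

/-- Two edges sharing a vertex. -/
def AdjEdges (D : Multigraph) (a b : D.E) : Prop :=
  ∃ v : D.V, (D.src a = v ∨ D.tgt a = v) ∧ (D.src b = v ∨ D.tgt b = v)

/-- The number of incidences of edges of weight `c` at the vertex `u`. -/
def incCount (D : Multigraph) (w : D.E → ℕ) (u : D.V) (c : ℕ) : ℕ :=
  (Finset.univ.filter fun e : D.E => D.src e = u ∧ w e = c).card +
    (Finset.univ.filter fun e : D.E => D.tgt e = u ∧ w e = c).card

/-- The `π^v`-value of the vertex `u`: the number of incident edges of weight `q + 1`
minus the number of incident edges of weight `q - 1`. -/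
def piV (D : Multigraph) (w : D.E → ℕ) (q : ℕ) (u : D.V) : ℤ :=
  (incCount D w u (q + 1) : ℤ) -
    (if q = 0 then 0 else (incCount D w u (q - 1) : ℤ))

/-- The `π^v`-values are balanced: pairwise differences at most one. -/
def BalancedPiV (D : Multigraph) (w : D.E → ℕ) (q : ℕ) : Prop :=
  ∀ u v : D.V, piV D w q u ≤ piV D w q v + 1

/-- The standard weight `q`, where `m = 3kq + r` with `-3k/2 < r ≤ 3k/2`. -/
def stdWeight (m k : ℕ) : ℕ := (2 * m + 3 * k - 1) / (6 * k)

/-- `w` is a balanced weighting of `D` of total size `m` (the implied weak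
subdivision is the generic member of `ℬ_m(D)`). -/
def IsBalancedWeighting (D : Multigraph) (w : D.E → ℕ) (m : ℕ) : Prop :=
  (∑ e : D.E, w e) = m ∧ BalancedWeights w ∧ ZeroAcyclic D w

/-- Every 3-bond of `D` is trivial (consists of the three edges at a single vertex). -/
def OnlyTrivialThreeBonds (D : Multigraph) : Prop :=
  ∀ F : Finset D.E, D.IsBond F → F.card = 3 →
    ∃ u : D.V, F = Finset.univ.filter fun e => D.src e = u ∨ D.tgt e = u

/-- The 3-dipole: two vertices joined by three parallel edges. -/
def dipole3 : Multigraph where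
  V := Fin 2
  E := Fin 3
  src _ := 0
  tgt _ := 1

/-- The complete graph `K₄`. -/
def K4 : Multigraph where
  V := Fin 4
  E := {p : Fin 4 × Fin 4 // p.1 < p.2}
  src p := p.1.1
  tgt p := p.1.2

/-- The complete bipartite graph `K_{3,3}`. -/
def K33 : Multigraph where
  V := Fin 3 ⊕ Fin 3
  E := Fin 3 × Fin 3
  src p := Sum.inl p.1
  tgt p := Sum.inr p.2

/-- The triangular prism `Π₃`; the edges `Sum.inr i` are the rungs. -/
def prism : Multigraph where
  V := Fin 3 × Bool
  E := (Fin 3 × Bool) ⊕ Fin 3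
  src := fun e => match e with
    | Sum.inl (i, b) => (i, b)
    | Sum.inr i => (i, false)
  tgt := fun e => match e with
    | Sum.inl (i, b) => (i + 1, b)
    | Sum.inr i => (i, true)

/-- The Wagner graph (the 4-Möbius ladder): the edges `Sum.inl i` are the rails
(the 8-cycle) and the edges `Sum.inr j` are the rungs. -/
def wagner : Multigraph where
  V := Fin 8
  E := Fin 8 ⊕ Fin 4
  src := fun e => match e with
    | Sum.inl i => i
    | Sum.inr j => ⟨j.val, by omega⟩
  tgt := fun e => match e with
    | Sum.inl i => i + 1
    | Sum.inr j => ⟨j.val + 4, by omega⟩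

/-- The Petersen graph. -/
def petersen : Multigraph where
  V := Fin 5 × Bool
  E := Fin 5 ⊕ Fin 5 ⊕ Fin 5
  src := fun e => match e with
    | Sum.inl i => (i, false)
    | Sum.inr (Sum.inl i) => (i, false)
    | Sum.inr (Sum.inr i) => (i, true)
  tgt := fun e => match e with
    | Sum.inl i => (i + 1, false)
    | Sum.inr (Sum.inl i) => (i, true)
    | Sum.inr (Sum.inr i) => (i + 2, true)


namespace BridgeProof

open Multigraph

variable {G : Multigraph}

lemma stepOn_symm {S : Finset G.E} {u v : G.V} (h : G.stepOn S u v) : G.stepOn S v u := by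
  obtain ⟨g, hg, h | h⟩ := h
  · exact ⟨g, hg, Or.inr h⟩
  · exact ⟨g, hg, Or.inl h⟩

lemma reach_symm {S : Finset G.E} {u v : G.V}
    (h : Relation.ReflTransGen (G.stepOn S) u v) :
    Relation.ReflTransGen (G.stepOn S) v u :=
  (@Relation.ReflTransGen.stdSymm _ _ ⟨fun _ _ h' => stepOn_symm h'⟩).symm _ _ h

lemma stepOn_mono {S S' : Finset G.E} (h : S ⊆ S') {u v : G.V} (hs : G.stepOn S u v) :
    G.stepOn S' u v := by
  obtain ⟨g, hg, ho⟩ := hs; exact ⟨g, h hg, ho⟩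

lemma reach_mono {S S' : Finset G.E} (h : S ⊆ S') {u v : G.V} :
    Relation.ReflTransGen (G.stepOn S) u v → Relation.ReflTransGen (G.stepOn S') u v :=
  Relation.ReflTransGen.mono (r := G.stepOn S) (p := G.stepOn S') (fun _ _ h' => stepOn_mono h h') u v

lemma connOn_mono {S S' : Finset G.E} (h : S ⊆ S') (hc : G.ConnOn S) : G.ConnOn S' :=
  fun u v => reach_mono h (hc u v)

lemma eqvGen_iff {S : Finset G.E} {u v : G.V} :
    Relation.EqvGen (G.stepOn S) u v ↔ Relation.ReflTransGen (G.stepOn S) u v := by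
  constructor
  · intro h
    induction h with
    | rel a b hab => exact Relation.ReflTransGen.single hab
    | refl a => exact Relation.ReflTransGen.refl
    | symm a b _ ih => exact reach_symm ih
    | trans a b c _ _ ih1 ih2 => exact ih1.trans ih2
  · intro h
    induction h with
    | refl => exact Relation.EqvGen.refl _
    | tail _ hbc ih =>
        exact Relation.EqvGen.trans _ _ _ ih (Relation.EqvGen.rel _ _ hbc)

lemma mk_eq_iff {S : Finset G.E} {u v : G.V} :
    Quot.mk (G.stepOn S) u = Quot.mk (G.stepOn S) v ↔
      Relation.ReflTransGen (G.stepOn S) u v :=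
  Quot.eq.trans eqvGen_iff

/-- Number of connected components of the spanning subgraph with edge set `S`. -/
noncomputable def ncomp (G : Multigraph) (S : Finset G.E) : ℕ :=
  Fintype.card (Quot (G.stepOn S))

noncomputable def proj {S S' : Finset G.E} (h : S ⊆ S') :
    Quot (G.stepOn S) → Quot (G.stepOn S') :=
  Quot.lift (Quot.mk _) (fun _ _ hab => Quot.sound (stepOn_mono h hab))

lemma proj_surj {S S' : Finset G.E} (h : S ⊆ S') : Function.Surjective (proj (G := G) h) := by
  intro q
  induction q using Quot.ind with
  | _ a => exact ⟨Quot.mk _ a, rfl⟩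

lemma ncomp_le {S S' : Finset G.E} (h : S ⊆ S') : ncomp G S' ≤ ncomp G S :=
  Fintype.card_le_of_surjective _ (proj_surj h)

lemma ncomp_le_cardV (S : Finset G.E) : ncomp G S ≤ Fintype.card G.V :=
  Fintype.card_le_of_surjective (Quot.mk _) (fun q => Quot.exists_rep q)

lemma ncomp_lt {S : Finset G.E} {g : G.E}
    (h : ¬ Relation.ReflTransGen (G.stepOn S) (G.src g) (G.tgt g)) :
    ncomp G (insert g S) < ncomp G S := by
  apply Fintype.card_lt_of_surjective_not_injective (proj (Finset.subset_insert g S))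
  · exact proj_surj _
  · intro hinj
    have h1 : proj (G := G) (Finset.subset_insert g S) (Quot.mk _ (G.src g)) =
        proj (G := G) (Finset.subset_insert g S) (Quot.mk _ (G.tgt g)) := by
      show Quot.mk _ (G.src g) = Quot.mk _ (G.tgt g)
      exact Quot.sound ⟨g, Finset.mem_insert_self g S, Or.inl ⟨rfl, rfl⟩⟩
    exact h (mk_eq_iff.1 (hinj h1))

lemma reach_insert_reduce {S : Finset G.E} {g : G.E}
    (hg : Relation.ReflTransGen (G.stepOn S) (G.src g) (G.tgt g)) {u v : G.V}
    (h : Relation.ReflTransGen (G.stepOn (insert g S)) u v) :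
    Relation.ReflTransGen (G.stepOn S) u v := by
  induction h with
  | refl => exact Relation.ReflTransGen.refl
  | tail _ hbc ih =>
      refine ih.trans ?_
      obtain ⟨g', hg', ho⟩ := hbc
      rcases Finset.mem_insert.1 hg' with rfl | hmem
      · rcases ho with ⟨h1, h2⟩ | ⟨h1, h2⟩
        · rw [← h1, ← h2]; exact hg
        · rw [← h1, ← h2]; exact reach_symm hg
      · exact Relation.ReflTransGen.single ⟨g', hmem, ho⟩

lemma reach_insert_transfer {S T : Finset G.E} {g : G.E}
    (hST : ∀ u v : G.V, Relation.ReflTransGen (G.stepOn S) u v →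
      Relation.ReflTransGen (G.stepOn T) u v) {u v : G.V}
    (h : Relation.ReflTransGen (G.stepOn (insert g S)) u v) :
    Relation.ReflTransGen (G.stepOn (insert g T)) u v := by
  induction h with
  | refl => exact Relation.ReflTransGen.refl
  | tail _ hbc ih =>
      refine ih.trans ?_
      obtain ⟨g', hg', ho⟩ := hbc
      rcases Finset.mem_insert.1 hg' with rfl | hmem
      · exact Relation.ReflTransGen.single ⟨g', Finset.mem_insert_self _ _, ho⟩
      · exact reach_mono (Finset.subset_insert g T)
          (hST _ _ (Relation.ReflTransGen.single ⟨g', hmem, ho⟩))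

lemma exists_forest (S : Finset G.E) :
    ∃ T ⊆ S, T.card + ncomp G S ≤ Fintype.card G.V ∧
      (∀ u v : G.V, Relation.ReflTransGen (G.stepOn T) u v ↔
        Relation.ReflTransGen (G.stepOn S) u v) := by
  classical
  induction S using Finset.induction_on with
  | empty =>
      refine ⟨∅, Finset.Subset.refl _, ?_, fun u v => Iff.rfl⟩
      simpa using ncomp_le_cardV (G := G) ∅
  | @insert g S hgS ih =>
      obtain ⟨T, hTS, hcard, hiff⟩ := ih
      by_cases hr : Relation.ReflTransGen (G.stepOn S) (G.src g) (G.tgt g)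
      · refine ⟨T, hTS.trans (Finset.subset_insert g S), ?_, fun u v => ?_⟩
        · have h1 := ncomp_le (G := G) (Finset.subset_insert g S)
          omega
        · constructor
          · intro h; exact reach_mono (Finset.subset_insert g S) ((hiff u v).1 h)
          · intro h; exact (hiff u v).2 (reach_insert_reduce hr h)
      · refine ⟨insert g T, Finset.insert_subset_insert g hTS, ?_, fun u v => ?_⟩
        · have h1 := Finset.card_insert_le g T
          have h2 := ncomp_lt (G := G) hr
          omega
        · constructor
          · intro h
            exact reach_mono (Finset.insert_subset_insert g hTS) h
          · intro h
            exact reach_insert_transfer (fun u v h' => (hiff u v).2 h') h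

lemma ncomp_eq_one (hV : Nonempty G.V) {S : Finset G.E} (hc : G.ConnOn S) :
    ncomp G S = 1 := by
  obtain ⟨v0⟩ := hV
  unfold ncomp
  rw [Fintype.card_eq_one_iff]
  refine ⟨Quot.mk _ v0, fun q => ?_⟩
  induction q using Quot.ind with
  | _ a => exact mk_eq_iff.2 (hc a v0)

lemma exists_conn_subset (hV : Nonempty G.V) {S : Finset G.E} (hc : G.ConnOn S) {j : ℕ}
    (h1 : Fintype.card G.V ≤ j + 1) (h2 : j ≤ S.card) :
    ∃ S' ⊆ S, S'.card = j ∧ G.ConnOn S' := by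
  obtain ⟨T, hTS, hcard, hiff⟩ := exists_forest (G := G) S
  rw [ncomp_eq_one hV hc] at hcard
  obtain ⟨C, hTC, hCS, hCcard⟩ :=
    Finset.exists_subsuperset_card_eq (n := j) hTS (by omega) (by omega)
  refine ⟨C, hCS, by omega, fun u v => ?_⟩
  exact reach_mono hTC ((hiff u v).2 (hc u v))

lemma reach_drop_loop {e : G.E} (hloop : G.src e = G.tgt e) {S : Finset G.E} {u v : G.V}
    (h : Relation.ReflTransGen (G.stepOn S) u v) :
    Relation.ReflTransGen (G.stepOn (S.erase e)) u v := by
  induction h with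
  | refl => exact Relation.ReflTransGen.refl
  | @tail b c _ hbc ih =>
      obtain ⟨g, hg, ho⟩ := hbc
      by_cases hge : g = e
      · subst hge
        have hbc' : b = c := by
          rcases ho with ⟨h1, h2⟩ | ⟨h1, h2⟩
          · rw [← h1, ← h2]; exact hloop
          · rw [← h2, ← h1]; exact hloop.symm
        exact hbc' ▸ ih
      · exact ih.tail ⟨g, Finset.mem_erase.2 ⟨hge, hg⟩, ho⟩

lemma bridge_not_loop (hc : G.Connected) {e : G.E} (hb : G.IsBridge e) :
    G.src e ≠ G.tgt e := by
  intro hloop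
  refine hb (fun u v => ?_)
  have h2 := reach_drop_loop (G := G) hloop (hc u v)
  rwa [Finset.erase_eq] at h2

lemma bridge_mem_conn {e : G.E} (hb : G.IsBridge e) {S : Finset G.E} (hc : G.ConnOn S) :
    e ∈ S := by
  by_contra he
  refine hb (connOn_mono (fun g hgS => ?_) hc)
  refine Finset.mem_sdiff.2 ⟨Finset.mem_univ g, fun hgsing => ?_⟩
  exact he ((Finset.mem_singleton.1 hgsing) ▸ hgS)

lemma exists_nonbridge (hc : G.Connected)
    (h2 : 2 ≤ Fintype.card G.V) (hm : Fintype.card G.V ≤ Fintype.card G.E) :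
    ∃ f : G.E, G.ConnOn (Finset.univ \ {f}) := by
  have hV : Nonempty G.V := Fintype.card_pos_iff.1 (by omega)
  obtain ⟨S', hS'sub, hS'card, hS'conn⟩ :=
    exists_conn_subset hV hc (j := Fintype.card G.E - 1) (by omega)
      (by rw [Finset.card_univ]; omega)
  have hne : S' ≠ Finset.univ := by
    intro h
    rw [h, Finset.card_univ] at hS'card
    omega
  obtain ⟨f, _, hfS⟩ :=
    Finset.exists_of_ssubset (lt_of_le_of_ne (Finset.subset_univ S') hne)
  refine ⟨f, connOn_mono (fun g hg => ?_) hS'conn⟩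
  refine Finset.mem_sdiff.2 ⟨Finset.mem_univ g, fun hgsing => ?_⟩
  exact hfS ((Finset.mem_singleton.1 hgsing) ▸ hg)

/-- Contraction map for the bridge `e`: send `tgt e` to `src e`. -/
noncomputable def rho (G : Multigraph) (e : G.E) : G.V → G.V :=
  fun w => if w = G.tgt e then G.src e else w

/-- Contract the bridge `e` and subdivide the edge `f` using the freed vertex `tgt e`
as the new middle vertex.  Same vertex and edge types as `G`. -/
noncomputable def shiftG (G : Multigraph) (e f : G.E) : Multigraph where
  V := G.V
  E := G.E
  src g := if g = e then G.tgt e else if g = f then rho G e (G.src f) else rho G e (G.src g)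
  tgt g := if g = e then rho G e (G.tgt f) else if g = f then G.tgt e else rho G e (G.tgt g)

section Shift

variable (e f : G.E)

lemma rho_tgt : rho G e (G.tgt e) = G.src e := if_pos rfl

lemma rho_of_ne {w : G.V} (h : w ≠ G.tgt e) : rho G e w = w := if_neg h

lemma shift_src_e : (shiftG G e f).src e = G.tgt e := by simp [shiftG]

lemma shift_tgt_e : (shiftG G e f).tgt e = rho G e (G.tgt f) := by simp [shiftG]

lemma shift_src_f (hef : f ≠ e) : (shiftG G e f).src f = rho G e (G.src f) := by
  simp [shiftG, hef]

lemma shift_tgt_f (hef : f ≠ e) : (shiftG G e f).tgt f = G.tgt e := by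
  simp [shiftG, hef]

lemma shift_src_g {g : G.E} (h1 : g ≠ e) (h2 : g ≠ f) :
    (shiftG G e f).src g = rho G e (G.src g) := by simp [shiftG, h1, h2]

lemma shift_tgt_g {g : G.E} (h1 : g ≠ e) (h2 : g ≠ f) :
    (shiftG G e f).tgt g = rho G e (G.tgt g) := by simp [shiftG, h1, h2]

lemma rho_eq_of_e (hne : G.src e ≠ G.tgt e) {a b : G.V}
    (ho : (G.src e = a ∧ G.tgt e = b) ∨ (G.src e = b ∧ G.tgt e = a)) :
    rho G e a = rho G e b := by
  rcases ho with ⟨h1, h2⟩ | ⟨h1, h2⟩ <;>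
    rw [← h1, ← h2, rho_tgt, rho_of_ne (G := G) (e := e) hne]

lemma reach_map {S S' : Finset G.E}
    (hmap : ∀ a b, G.stepOn S a b →
      Relation.ReflTransGen ((shiftG G e f).stepOn S') (rho G e a) (rho G e b))
    {a b : G.V} (h : Relation.ReflTransGen (G.stepOn S) a b) :
    Relation.ReflTransGen ((shiftG G e f).stepOn S') (rho G e a) (rho G e b) := by
  induction h with
  | refl => exact Relation.ReflTransGen.refl
  | tail _ hbc ih => exact ih.trans (hmap _ _ hbc)

lemma step_map_both {S : Finset G.E} (hne : G.src e ≠ G.tgt e) (hef : f ≠ e)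
    (he : e ∈ S) (hf : f ∈ S) :
    ∀ a b, G.stepOn S a b →
      Relation.ReflTransGen ((shiftG G e f).stepOn S) (rho G e a) (rho G e b) := by
  have hvx : (shiftG G e f).stepOn S (rho G e (G.src f)) (G.tgt e) :=
    ⟨f, hf, Or.inl ⟨shift_src_f e f hef, shift_tgt_f e f hef⟩⟩
  have hvy : (shiftG G e f).stepOn S (G.tgt e) (rho G e (G.tgt f)) :=
    ⟨e, he, Or.inl ⟨shift_src_e e f, shift_tgt_e e f⟩⟩
  intro a b hab
  obtain ⟨g, hg, ho⟩ := hab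
  by_cases hgE : g = e
  · subst hgE
    exact (rho_eq_of_e g hne ho) ▸ Relation.ReflTransGen.refl
  · by_cases hgF : g = f
    · subst hgF
      have hpath : Relation.ReflTransGen ((shiftG G e g).stepOn S)
          (rho G e (G.src g)) (rho G e (G.tgt g)) :=
        Relation.ReflTransGen.head hvx (Relation.ReflTransGen.single hvy)
      rcases ho with ⟨h1, h2⟩ | ⟨h1, h2⟩
      · rw [← h1, ← h2]; exact hpath
      · rw [← h1, ← h2]; exact reach_symm hpath
    · refine Relation.ReflTransGen.single ⟨g, hg, ?_⟩
      rcases ho with ⟨h1, h2⟩ | ⟨h1, h2⟩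
      · exact Or.inl ⟨by rw [shift_src_g e f hgE hgF, h1],
          by rw [shift_tgt_g e f hgE hgF, h2]⟩
      · exact Or.inr ⟨by rw [shift_src_g e f hgE hgF, h1],
          by rw [shift_tgt_g e f hgE hgF, h2]⟩

lemma step_map_insert {S : Finset G.E} (hne : G.src e ≠ G.tgt e) (hef : f ≠ e)
    (hf : f ∉ S) :
    ∀ a b, G.stepOn S a b →
      Relation.ReflTransGen ((shiftG G e f).stepOn (insert f (S.erase e)))
        (rho G e a) (rho G e b) := by
  intro a b hab
  obtain ⟨g, hg, ho⟩ := hab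
  by_cases hgE : g = e
  · subst hgE
    exact (rho_eq_of_e g hne ho) ▸ Relation.ReflTransGen.refl
  · have hgF : g ≠ f := fun h => hf (h ▸ hg)
    refine Relation.ReflTransGen.single
      ⟨g, Finset.mem_insert_of_mem (Finset.mem_erase.2 ⟨hgE, hg⟩), ?_⟩
    rcases ho with ⟨h1, h2⟩ | ⟨h1, h2⟩
    · exact Or.inl ⟨by rw [shift_src_g e f hgE hgF, h1],
        by rw [shift_tgt_g e f hgE hgF, h2]⟩
    · exact Or.inr ⟨by rw [shift_src_g e f hgE hgF, h1],
        by rw [shift_tgt_g e f hgE hgF, h2]⟩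

lemma step_map_sdiff (hne : G.src e ≠ G.tgt e) (hef : f ≠ e) :
    ∀ a b, G.stepOn (Finset.univ \ {f}) a b →
      Relation.ReflTransGen ((shiftG G e f).stepOn (Finset.univ \ {f}))
        (rho G e a) (rho G e b) := by
  intro a b hab
  obtain ⟨g, hg, ho⟩ := hab
  by_cases hgE : g = e
  · subst hgE
    exact (rho_eq_of_e g hne ho) ▸ Relation.ReflTransGen.refl
  · have hgF : g ≠ f := by
      intro h
      subst h
      simp at hg
    refine Relation.ReflTransGen.single ⟨g, hg, ?_⟩
    rcases ho with ⟨h1, h2⟩ | ⟨h1, h2⟩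
    · exact Or.inl ⟨by rw [shift_src_g e f hgE hgF, h1],
        by rw [shift_tgt_g e f hgE hgF, h2]⟩
    · exact Or.inr ⟨by rw [shift_src_g e f hgE hgF, h1],
        by rw [shift_tgt_g e f hgE hgF, h2]⟩

lemma connOn_shift_of_link {S' : Finset G.E}
    (hreach : ∀ a b : G.V,
      Relation.ReflTransGen ((shiftG G e f).stepOn S') (rho G e a) (rho G e b))
    (hlinkv : Relation.ReflTransGen ((shiftG G e f).stepOn S')
      (G.tgt e) (rho G e (G.tgt e))) :
    (shiftG G e f).ConnOn S' := by
  have hlink : ∀ w : G.V,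
      Relation.ReflTransGen ((shiftG G e f).stepOn S') w (rho G e w) := by
    intro w
    by_cases hw : w = G.tgt e
    · subst hw; exact hlinkv
    · rw [rho_of_ne (G := G) (e := e) hw]; exact Relation.ReflTransGen.refl
  intro w w'
  exact ((hlink w).trans (hreach w w')).trans (reach_symm (hlink w'))

lemma connOn_shift_both {S : Finset G.E} (hne : G.src e ≠ G.tgt e) (hef : f ≠ e)
    (hc : G.ConnOn S) (he : e ∈ S) (hf : f ∈ S) :
    (shiftG G e f).ConnOn S := by
  have hreach : ∀ a b : G.V,
      Relation.ReflTransGen ((shiftG G e f).stepOn S) (rho G e a) (rho G e b) :=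
    fun a b => reach_map e f (step_map_both e f hne hef he hf) (hc a b)
  refine connOn_shift_of_link e f hreach ?_
  refine Relation.ReflTransGen.head
    (stepOn_symm ⟨f, hf, Or.inl ⟨shift_src_f e f hef, shift_tgt_f e f hef⟩⟩) ?_
  exact hreach (G.src f) (G.tgt e)

lemma connOn_shift_insert {S : Finset G.E} (hne : G.src e ≠ G.tgt e) (hef : f ≠ e)
    (hc : G.ConnOn S) (hf : f ∉ S) :
    (shiftG G e f).ConnOn (insert f (S.erase e)) := by
  have hreach : ∀ a b : G.V,
      Relation.ReflTransGen ((shiftG G e f).stepOn (insert f (S.erase e)))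
        (rho G e a) (rho G e b) :=
    fun a b => reach_map e f (step_map_insert e f hne hef hf) (hc a b)
  refine connOn_shift_of_link e f hreach ?_
  refine Relation.ReflTransGen.head
    (stepOn_symm ⟨f, Finset.mem_insert_self f _,
      Or.inl ⟨shift_src_f e f hef, shift_tgt_f e f hef⟩⟩) ?_
  exact hreach (G.src f) (G.tgt e)

lemma connOn_shift_sdiff (hne : G.src e ≠ G.tgt e) (hef : f ≠ e)
    (hc : G.ConnOn (Finset.univ \ {f})) :
    (shiftG G e f).ConnOn (Finset.univ \ {f}) := by
  have hreach : ∀ a b : G.V,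
      Relation.ReflTransGen ((shiftG G e f).stepOn (Finset.univ \ {f}))
        (rho G e a) (rho G e b) :=
    fun a b => reach_map e f (step_map_sdiff e f hne hef) (hc a b)
  refine connOn_shift_of_link e f hreach ?_
  have hemem : e ∈ (Finset.univ \ {f} : Finset G.E) := by
    refine Finset.mem_sdiff.2 ⟨Finset.mem_univ e, fun h => ?_⟩
    exact hef (Finset.mem_singleton.1 h).symm
  refine Relation.ReflTransGen.head
    ⟨e, hemem, Or.inl ⟨shift_src_e e f, shift_tgt_e e f⟩⟩ ?_
  exact hreach (G.tgt f) (G.tgt e)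

/-- The injection on connected spanning edge sets. -/
noncomputable def phi (e f : G.E) (S : Finset G.E) : Finset G.E :=
  if f ∈ S then S else insert f (S.erase e)

lemma phi_mem_f {S : Finset G.E} : f ∈ phi e f S := by
  unfold phi
  split
  · assumption
  · exact Finset.mem_insert_self _ _

lemma phi_card {S : Finset G.E} (he : e ∈ S) : (phi e f S).card = S.card := by
  unfold phi
  split
  · rfl
  · rename_i hf
    rw [Finset.card_insert_of_notMem (fun h => hf (Finset.mem_of_mem_erase h)),
      Finset.card_erase_of_mem he]
    have h1 : 1 ≤ S.card := Finset.card_pos.2 ⟨e, he⟩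
    omega

lemma phi_inj (hef : f ≠ e) {S₁ S₂ : Finset G.E} (h1 : e ∈ S₁) (h2 : e ∈ S₂)
    (h : phi e f S₁ = phi e f S₂) : S₁ = S₂ := by
  unfold phi at h
  by_cases hf1 : f ∈ S₁ <;> by_cases hf2 : f ∈ S₂ <;>
    simp only [hf1, hf2, if_pos, if_neg, if_true, if_false] at h
  · exact h
  · exfalso
    have : e ∈ insert f (S₂.erase e) := h ▸ h1
    rcases Finset.mem_insert.1 this with h' | h'
    · exact hef h'.symm
    · exact absurd rfl (Finset.mem_erase.1 h').1
  · exfalso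
    have : e ∈ insert f (S₁.erase e) := h.symm ▸ h2
    rcases Finset.mem_insert.1 this with h' | h'
    · exact hef h'.symm
    · exact absurd rfl (Finset.mem_erase.1 h').1
  · ext g
    by_cases hgf : g = f
    · subst hgf; simp [hf1, hf2]
    · by_cases hge : g = e
      · subst hge; simp [h1, h2]
      · have hmem : (g ∈ insert f (S₁.erase e)) ↔ (g ∈ insert f (S₂.erase e)) := by rw [h]
        simpa [Finset.mem_insert, Finset.mem_erase, hgf, hge] using hmem

lemma phi_conn {S : Finset G.E} (hne : G.src e ≠ G.tgt e) (hef : f ≠ e)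
    (hc : G.ConnOn S) (he : e ∈ S) : (shiftG G e f).ConnOn (phi e f S) := by
  unfold phi
  by_cases hfS : f ∈ S
  · exact Eq.mpr (congrArg (shiftG G e f).ConnOn (if_pos hfS)) (connOn_shift_both e f hne hef hc he ‹_›)
  · exact Eq.mpr (congrArg (shiftG G e f).ConnOn (if_neg hfS)) (connOn_shift_insert e f hne hef hc ‹_›)

end Shift

lemma d_add_conn (G : Multigraph) (i : ℕ) (hi : i ≤ G.nE) :
    G.d i + (Finset.univ.filter fun S : Finset G.E => S.card = G.nE - i ∧ G.ConnOn S).card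
      = (Finset.univ.filter fun F : Finset G.E => F.card = i).card := by
  have hbij : (Finset.univ.filter fun F : Finset G.E =>
        F.card = i ∧ G.ConnOn (Finset.univ \ F)).card
      = (Finset.univ.filter fun S : Finset G.E => S.card = G.nE - i ∧ G.ConnOn S).card := by
    apply Finset.card_nbij' (fun F => Finset.univ \ F) (fun S => Finset.univ \ S)
    · intro F hF
      rw [Finset.mem_coe, Finset.mem_filter] at hF ⊢
      obtain ⟨-, hFcard, hFconn⟩ := hF
      refine ⟨Finset.mem_univ _, ?_, hFconn⟩
      rw [Finset.card_sdiff_of_subset (Finset.subset_univ F), Finset.card_univ, hFcard]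
      rfl
    · intro S hS
      rw [Finset.mem_coe, Finset.mem_filter] at hS ⊢
      obtain ⟨-, hScard, hSconn⟩ := hS
      have hc : Fintype.card G.E = G.nE := rfl
      refine ⟨Finset.mem_univ _, ?_, ?_⟩
      · rw [Finset.card_sdiff_of_subset (Finset.subset_univ S), Finset.card_univ, hScard]
        omega
      · rw [Finset.sdiff_sdiff_eq_self (Finset.subset_univ S)]
        exact hSconn
    · intro F _
      exact Finset.sdiff_sdiff_eq_self (Finset.subset_univ F)
    · intro S _
      exact Finset.sdiff_sdiff_eq_self (Finset.subset_univ S)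
  have hdisj : Disjoint
      (Finset.univ.filter fun F : Finset G.E => F.card = i ∧ G.Disconnects F)
      (Finset.univ.filter fun F : Finset G.E =>
        F.card = i ∧ G.ConnOn (Finset.univ \ F)) := by
    rw [Finset.disjoint_left]
    intro F h1 h2
    simp only [Finset.mem_filter, Finset.mem_univ, true_and] at h1 h2
    exact h1.2 h2.2
  have hcard := Finset.card_union_of_disjoint hdisj
  have hunion : (Finset.univ.filter fun F : Finset G.E => F.card = i ∧ G.Disconnects F)
      ∪ (Finset.univ.filter fun F : Finset G.E =>
          F.card = i ∧ G.ConnOn (Finset.univ \ F))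
      = Finset.univ.filter fun F : Finset G.E => F.card = i := by
    ext F
    simp only [Finset.mem_union, Finset.mem_filter, Finset.mem_univ, true_and]
    have hiff : G.Disconnects F ↔ ¬ G.ConnOn (Finset.univ \ F) := Iff.rfl
    tauto
  rw [hunion] at hcard
  have hd : G.d i = (Finset.univ.filter fun F : Finset G.E =>
      F.card = i ∧ G.Disconnects F).card := rfl
  rw [hd, ← hbij]
  exact hcard.symm

lemma main_construction {G : Multigraph} {n k : ℕ} (hn : 2 ≤ n)
    (hnV : G.nV = n) (hnE : G.nE = n + k) (hconn : G.Connected)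
    {e : G.E} (hb : G.IsBridge e) :
    ∃ G' : Multigraph, memG G' n (n + k) ∧
      (∀ i : ℕ, 1 ≤ i → i ≤ k + 1 → G'.d i < G.d i) ∧
      (∀ p : ℝ, 0 < p → p < 1 → G.rel p < G'.rel p) := by
  have hcV : Fintype.card G.V = n := hnV
  have hcE : Fintype.card G.E = n + k := hnE
  have hV : Nonempty G.V := Fintype.card_pos_iff.1 (by omega)
  obtain ⟨f, hfconn⟩ := exists_nonbridge hconn (by omega) (by omega)
  have hef : f ≠ e := by
    rintro rfl
    exact hb hfconn
  have hne : G.src e ≠ G.tgt e := bridge_not_loop hconn hb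
  have hG'conn : (shiftG G e f).Connected :=
    connOn_shift_both e f hne hef hconn (Finset.mem_univ e) (Finset.mem_univ f)
  have hconn' : (shiftG G e f).ConnOn (Finset.univ \ {f}) :=
    connOn_shift_sdiff e f hne hef hfconn
  have hcard_sdiff : ((Finset.univ : Finset G.E) \ {f}).card = G.nE - 1 := by
    rw [Finset.card_sdiff_of_subset (Finset.singleton_subset_iff.2 (Finset.mem_univ f)),
      Finset.card_univ, Finset.card_singleton]
    rfl
  have key : ∀ i : ℕ, 1 ≤ i → i ≤ k + 1 →
      (Finset.univ.filter fun S : Finset G.E => S.card = G.nE - i ∧ G.ConnOn S).card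
        < (Finset.univ.filter fun S : Finset (shiftG G e f).E =>
            S.card = (shiftG G e f).nE - i ∧ (shiftG G e f).ConnOn S).card := by
    intro i hi1 hik
    have hnE' : G.nE = n + k := hnE
    obtain ⟨S₀, hS₀sub, hS₀card, hS₀conn⟩ :=
      exists_conn_subset (G := shiftG G e f) hV hconn' (j := G.nE - i)
        (by show Fintype.card G.V ≤ G.nE - i + 1; omega)
        (by show G.nE - i ≤ ((Finset.univ : Finset G.E) \ {f}).card
            rw [hcard_sdiff]; omega)
    have hsub : ((Finset.univ.filter fun S : Finset G.E =>
        S.card = G.nE - i ∧ G.ConnOn S).image (phi e f))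
        ⊆ (Finset.univ.filter fun S : Finset (shiftG G e f).E =>
            S.card = (shiftG G e f).nE - i ∧ (shiftG G e f).ConnOn S) := by
      intro X hX
      obtain ⟨S, hS, rfl⟩ := Finset.mem_image.1 hX
      rw [Finset.mem_filter] at hS
      obtain ⟨-, hScard, hSconn⟩ := hS
      have heS : e ∈ S := bridge_mem_conn hb hSconn
      refine Finset.mem_filter.2 ⟨Finset.mem_univ _, ?_,
        phi_conn e f hne hef hSconn heS⟩
      show (phi e f S).card = G.nE - i
      rw [phi_card e f heS]
      exact hScard
    have hinj : Set.InjOn (phi e f)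
        (Finset.univ.filter fun S : Finset G.E => S.card = G.nE - i ∧ G.ConnOn S) :=
      fun S₁ hS₁ S₂ hS₂ h =>
        phi_inj e f hef
          (bridge_mem_conn hb (Finset.mem_filter.1 hS₁).2.2)
          (bridge_mem_conn hb (Finset.mem_filter.1 hS₂).2.2) h
    have hS₀mem : S₀ ∈ (Finset.univ.filter fun S : Finset (shiftG G e f).E =>
        S.card = (shiftG G e f).nE - i ∧ (shiftG G e f).ConnOn S) := by
      refine Finset.mem_filter.2 ⟨Finset.mem_univ _, ?_, hS₀conn⟩
      show S₀.card = G.nE - i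
      exact hS₀card
    have hS₀not : S₀ ∉ ((Finset.univ.filter fun S : Finset G.E =>
        S.card = G.nE - i ∧ G.ConnOn S).image (phi e f)) := by
      intro h
      obtain ⟨S, -, hSe⟩ := Finset.mem_image.1 h
      have hfS : f ∈ S₀ := hSe ▸ phi_mem_f e f
      have hmem := hS₀sub hfS
      exact (Finset.mem_sdiff.1 hmem).2 (Finset.mem_singleton_self _)
    calc (Finset.univ.filter fun S : Finset G.E =>
          S.card = G.nE - i ∧ G.ConnOn S).card
        = ((Finset.univ.filter fun S : Finset G.E =>
            S.card = G.nE - i ∧ G.ConnOn S).image (phi e f)).card :=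
          (Finset.card_image_of_injOn hinj).symm
      _ < (Finset.univ.filter fun S : Finset (shiftG G e f).E =>
          S.card = (shiftG G e f).nE - i ∧ (shiftG G e f).ConnOn S).card :=
        by exact lt_of_lt_of_le (Finset.card_lt_card ((Finset.ssubset_iff_of_subset hsub).2
            ⟨S₀, Finset.mem_filter.2 ⟨Finset.mem_univ _, (Finset.mem_filter.1 hS₀mem).2⟩, hS₀not⟩))
            (le_of_eq (by congr))
  refine ⟨shiftG G e f, ⟨hnV, hnE, hG'conn⟩, ?_, ?_⟩
  · intro i hi1 hik
    have hnE' : G.nE = n + k := hnE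
    have hi2 : i ≤ G.nE := by omega
    have hi2' : i ≤ (shiftG G e f).nE := hi2
    have hA := d_add_conn G i hi2
    have hA' := d_add_conn (shiftG G e f) i hi2'
    have htot : (Finset.univ.filter fun F : Finset (shiftG G e f).E => F.card = i).card
        = (Finset.univ.filter fun F : Finset G.E => F.card = i).card := rfl
    have hk := key i hi1 hik
    omega
  · intro p hp0 hp1
    have h1p : (0 : ℝ) < 1 - p := by linarith
    have hGrel : G.rel p = ∑ S ∈ Finset.univ.filter (fun S : Finset G.E => G.ConnOn S),
        p ^ S.card * (1 - p) ^ (G.nE - S.card) := by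
      rw [Finset.sum_filter]
      rfl
    have hG'rel : (shiftG G e f).rel p
        = ∑ S ∈ Finset.univ.filter (fun S : Finset G.E => (shiftG G e f).ConnOn S),
            p ^ S.card * (1 - p) ^ (G.nE - S.card) := by
      exact (Finset.sum_filter _ _).symm
    have hinj : Set.InjOn (phi e f)
        (Finset.univ.filter fun S : Finset G.E => G.ConnOn S) :=
      fun S₁ hS₁ S₂ hS₂ h =>
        phi_inj e f hef
          (bridge_mem_conn hb (Finset.mem_filter.1 hS₁).2)
          (bridge_mem_conn hb (Finset.mem_filter.1 hS₂).2) h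
    have himg : ∑ S ∈ (Finset.univ.filter
          (fun S : Finset G.E => G.ConnOn S)).image (phi e f),
          p ^ S.card * (1 - p) ^ (G.nE - S.card)
        = ∑ S ∈ Finset.univ.filter (fun S : Finset G.E => G.ConnOn S),
            p ^ S.card * (1 - p) ^ (G.nE - S.card) := by
      rw [Finset.sum_image (fun x hx y hy h => hinj hx hy h)]
      refine Finset.sum_congr rfl (fun S hS => ?_)
      rw [phi_card e f (bridge_mem_conn hb (Finset.mem_filter.1 hS).2)]
    have hsub : ((Finset.univ.filter
          (fun S : Finset G.E => G.ConnOn S)).image (phi e f))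
        ⊆ Finset.univ.filter (fun S : Finset G.E => (shiftG G e f).ConnOn S) := by
      intro X hX
      obtain ⟨S, hS, rfl⟩ := Finset.mem_image.1 hX
      rw [Finset.mem_filter] at hS
      exact Finset.mem_filter.2 ⟨Finset.mem_univ _,
        phi_conn e f hne hef hS.2 (bridge_mem_conn hb hS.2)⟩
    have hs0mem : (Finset.univ \ {f} : Finset G.E)
        ∈ Finset.univ.filter (fun S : Finset G.E => (shiftG G e f).ConnOn S) :=
      Finset.mem_filter.2 ⟨Finset.mem_univ _, hconn'⟩
    have hs0not : (Finset.univ \ {f} : Finset G.E)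
        ∉ ((Finset.univ.filter (fun S : Finset G.E => G.ConnOn S)).image (phi e f)) := by
      intro h
      obtain ⟨S, -, hSe⟩ := Finset.mem_image.1 h
      have hfS : f ∈ (Finset.univ \ {f} : Finset G.E) := hSe ▸ phi_mem_f e f
      simp at hfS
    have hlt := Finset.sum_lt_sum_of_subset
      (f := fun S : Finset G.E => p ^ S.card * (1 - p) ^ (G.nE - S.card))
      hsub hs0mem hs0not
      (mul_pos (pow_pos hp0 _) (pow_pos h1p _))
      (fun S _ _ => mul_nonneg (pow_nonneg hp0.le _) (pow_nonneg h1p.le _))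
    rw [hGrel, hG'rel]
    linarith

end BridgeProof

/-- a connected (n, n+k)-graph with a bridge (n ≥ 2, k ≥ 0) is beaten on
every d_i, 1 ≤ i ≤ k+1, by some other member of 𝒢_{n,n+k}; hence every p-optimal
(n, n+k)-graph is bridgeless. -/
theorem bridged_graphs_not_optimal (n k : ℕ) (hn : 2 ≤ n) :
    (∀ G : Multigraph, memG G n (n + k) → (∃ e : G.E, G.IsBridge e) →
      ∃ G' : Multigraph, memG G' n (n + k) ∧
        ∀ i : ℕ, 1 ≤ i → i ≤ k + 1 → G'.d i < G.d i) ∧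
    (∀ p : ℝ, 0 < p → p < 1 →
      ∀ H : Multigraph, pOptimal H n (n + k) p → H.Bridgeless) := by
  constructor
  · rintro G hG ⟨e, hb⟩
    obtain ⟨G', hmem, hd, -⟩ :=
      BridgeProof.main_construction hn hG.1 hG.2.1 hG.2.2 hb
    exact ⟨G', hmem, hd⟩
  · intro p hp0 hp1 H hopt e hb
    obtain ⟨G', hmem, -, hrel⟩ :=
      BridgeProof.main_construction hn hopt.1.1 hopt.1.2.1 hopt.1.2.2 hb
    have h1 := hopt.2 G' hmem
    have h2 := hrel p hp0 hp1
    linarith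
end
end

section
/- Let H, G ∈ G_{n,m}. (a) If the edge-connectivity of H is strictly larger than that of G, then there exists p₀ ∈ (0,1) such that R(H,p) > R(G,p) for all p ∈ (p₀,1). (b) If the number of spanning trees of H is strictly larger than that of G, then there exists p₀ ∈ (0,1) such that R(H,p) > R(G,p) for all p ∈ (0,p₀). -/
open Classical Finset

noncomputable section

namespace Multigraph
variable (G : Multigraph)

lemma stepOn_empty (u v : G.V) : ¬ G.stepOn ∅ u v := by
  rintro ⟨e, he, -⟩; exact absurd he (Finset.notMem_empty e)

lemma reflTransGen_quot {S : Finset G.E} {a b : G.V}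
    (h : Relation.ReflTransGen (G.stepOn S) a b) :
    Quot.mk (G.stepOn S) a = Quot.mk (G.stepOn S) b := by
  induction h with
  | refl => rfl
  | tail _ hstep ih => exact ih.trans (Quot.sound hstep)

lemma card_quot_le (S : Finset G.E) :
    G.nV ≤ Fintype.card (Quot (G.stepOn S)) + S.card := by
  classical
  induction S using Finset.induction_on with
  | empty =>
    rw [Finset.card_empty, add_zero]
    have hemp : ∀ a b : G.V, Relation.EqvGen (G.stepOn ∅) a b → a = b := by
      intro a b h
      induction h with
      | rel a b hab => exact absurd hab (G.stepOn_empty a b)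
      | refl => rfl
      | symm _ _ _ ih => exact ih.symm
      | trans _ _ _ _ _ ih1 ih2 => exact ih1.trans ih2
    exact Fintype.card_le_of_injective (Quot.mk _)
      fun a b hab => hemp a b (Quot.eqvGen_exact hab)
  | @insert e S he ih =>
    have mono : ∀ a b, G.stepOn S a b → G.stepOn (insert e S) a b := by
      rintro a b ⟨f, hf, h⟩; exact ⟨f, Finset.mem_insert_of_mem hf, h⟩
    set A := Quot.mk (G.stepOn S) (G.src e) with hA
    set B := Quot.mk (G.stepOn S) (G.tgt e) with hB
    have key : ∀ a b, Relation.EqvGen (G.stepOn (insert e S)) a b →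
        Quot.mk (G.stepOn S) a = Quot.mk (G.stepOn S) b ∨
        ((Quot.mk (G.stepOn S) a = A ∨ Quot.mk (G.stepOn S) a = B) ∧
         (Quot.mk (G.stepOn S) b = A ∨ Quot.mk (G.stepOn S) b = B)) := by
      intro a b h
      induction h with
      | rel a b hab =>
        obtain ⟨f, hf, hends⟩ := hab
        rcases Finset.mem_insert.mp hf with rfl | hfS
        · right
          rcases hends with ⟨h1, h2⟩ | ⟨h1, h2⟩
          · exact ⟨Or.inl (by rw [hA, h1]), Or.inr (by rw [hB, h2])⟩
          · exact ⟨Or.inr (by rw [hB, h2]), Or.inl (by rw [hA, h1])⟩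
        · exact Or.inl (Quot.sound ⟨f, hfS, hends⟩)
      | refl a => exact Or.inl rfl
      | symm _ _ _ ih =>
        rcases ih with h | ⟨h1, h2⟩
        · exact Or.inl h.symm
        · exact Or.inr ⟨h2, h1⟩
      | trans a b c _ _ ih1 ih2 =>
        rcases ih1 with h | ⟨ha, hb⟩ <;> rcases ih2 with h' | ⟨hb', hc⟩
        · exact Or.inl (h.trans h')
        · exact Or.inr ⟨h ▸ hb', hc⟩
        · exact Or.inr ⟨ha, h' ▸ hb⟩
        · exact Or.inr ⟨ha, hc⟩
    set φ : Quot (G.stepOn S) → Quot (G.stepOn (insert e S)) :=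
      Quot.lift (fun a => Quot.mk _ a) (fun a b h => Quot.sound (mono a b h)) with hφ
    have hkey2 : ∀ x y : Quot (G.stepOn S), φ x = φ y →
        x = y ∨ ((x = A ∨ x = B) ∧ (y = A ∨ y = B)) := by
      intro x y
      induction x using Quot.ind with | _ a =>
      induction y using Quot.ind with | _ b =>
      intro hxy
      exact key a b (Quot.eqvGen_exact hxy)
    have hcard : Fintype.card (Quot (G.stepOn S)) ≤
        Fintype.card (Quot (G.stepOn (insert e S))) + 1 := by
      have hinj : Function.Injective
          (fun x : Quot (G.stepOn S) => if x = A then none else some (φ x)) := by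
        intro x y hxy
        by_cases hx : x = A <;> by_cases hy : y = A <;> simp [hx, hy] at hxy
        · exact hx.trans hy.symm
        · rcases hkey2 x y hxy with h | ⟨h1, h2⟩
          · exact h
          · rw [h1.resolve_left hx, h2.resolve_left hy]
      simpa [Fintype.card_option] using Fintype.card_le_of_injective _ hinj
    calc G.nV ≤ Fintype.card (Quot (G.stepOn S)) + S.card := ih
      _ ≤ Fintype.card (Quot (G.stepOn (insert e S))) + 1 + S.card := by omega
      _ = Fintype.card (Quot (G.stepOn (insert e S))) + (insert e S).card := by
          rw [Finset.card_insert_of_notMem he]; omega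

lemma nV_le_of_connOn {S : Finset G.E} (h : G.ConnOn S) : G.nV ≤ S.card + 1 := by
  have h1 := G.card_quot_le S
  have h2 : Fintype.card (Quot (G.stepOn S)) ≤ 1 := by
    rw [Fintype.card_le_one_iff_subsingleton]
    constructor
    intro x y
    induction x using Quot.ind with | _ a =>
    induction y using Quot.ind with | _ b =>
    exact G.reflTransGen_quot (h a b)
  omega

end Multigraph

namespace Multigraph
open Classical Finset

/-- number of connected spanning subgraphs with `i` edges -/
def cc (G : Multigraph) (i : ℕ) : ℕ :=
  ((Finset.univ : Finset (Finset G.E)).filter fun S => S.card = i ∧ G.ConnOn S).card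

/-- number of `i`-subsets whose removal keeps the graph connected -/
def nd (G : Multigraph) (i : ℕ) : ℕ :=
  ((Finset.univ : Finset (Finset G.E)).filter
    fun F => F.card = i ∧ G.ConnOn (Finset.univ \ F)).card

variable (G : Multigraph)

lemma rel_eq_sum (p : ℝ) :
    G.rel p = ∑ i ∈ range (G.nE + 1), (G.cc i : ℝ) * (p ^ i * (1 - p) ^ (G.nE - i)) := by
  classical
  rw [rel, ← Finset.sum_fiberwise_of_maps_to (g := Finset.card) (t := Finset.range (G.nE + 1))
      (fun S _ => Finset.mem_range.mpr (Nat.lt_succ_of_le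
        (by simpa [nE] using Finset.card_le_univ S)))]
  refine Finset.sum_congr rfl fun i hi => ?_
  rw [Finset.sum_congr rfl (fun S hS => by
      rw [(Finset.mem_filter.mp hS).2] :
    ∀ S ∈ Finset.univ.filter (fun S : Finset G.E => S.card = i),
      (if G.ConnOn S then p ^ S.card * (1 - p) ^ (G.nE - S.card) else 0) =
      (if G.ConnOn S then p ^ i * (1 - p) ^ (G.nE - i) else 0))]
  rw [← Finset.sum_filter, Finset.filter_filter, Finset.sum_const, nsmul_eq_mul]
  rfl

lemma rel_eq_sum_compl (p : ℝ) :
    G.rel p = ∑ i ∈ range (G.nE + 1), (G.nd i : ℝ) * (p ^ (G.nE - i) * (1 - p) ^ i) := by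
  classical
  have step1 : G.rel p = ∑ F : Finset G.E,
      if G.ConnOn (Finset.univ \ F) then p ^ (G.nE - F.card) * (1 - p) ^ F.card else 0 := by
    rw [rel]
    refine Finset.sum_nbij' (fun S => Finset.univ \ S) (fun F => Finset.univ \ F)
      (fun _ _ => Finset.mem_univ _) (fun _ _ => Finset.mem_univ _)
      (fun S _ => by simp) (fun F _ => by simp) (fun S _ => ?_)
    have h1 : Finset.univ \ (Finset.univ \ S) = S := by simp
    have h2 : (Finset.univ \ S).card = G.nE - S.card := by
      rw [← Finset.compl_eq_univ_sdiff, Finset.card_compl]; rfl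
    have h3 : S.card ≤ G.nE := by simpa [nE] using Finset.card_le_univ S
    rw [h1, h2, Nat.sub_sub_self h3]
  rw [step1, ← Finset.sum_fiberwise_of_maps_to (g := Finset.card)
      (t := Finset.range (G.nE + 1))
      (fun S _ => Finset.mem_range.mpr (Nat.lt_succ_of_le
        (by simpa [nE] using Finset.card_le_univ S)))]
  refine Finset.sum_congr rfl fun i hi => ?_
  rw [Finset.sum_congr rfl (fun F hF => by
      rw [(Finset.mem_filter.mp hF).2] :
    ∀ F ∈ Finset.univ.filter (fun F : Finset G.E => F.card = i),
      (if G.ConnOn (Finset.univ \ F) then p ^ (G.nE - F.card) * (1 - p) ^ F.card else 0) =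
      (if G.ConnOn (Finset.univ \ F) then p ^ (G.nE - i) * (1 - p) ^ i else 0))]
  rw [← Finset.sum_filter, Finset.filter_filter, Finset.sum_const, nsmul_eq_mul]
  rfl

lemma nd_add_d (i : ℕ) : G.nd i + G.d i = (G.nE).choose i := by
  classical
  have hsplit := Finset.card_filter_add_card_filter_not
    (s := Finset.univ.filter fun F : Finset G.E => F.card = i)
    (p := fun F => G.ConnOn (Finset.univ \ F))
  rw [Finset.filter_filter, Finset.filter_filter] at hsplit
  have hcard : (Finset.univ.filter fun F : Finset G.E => F.card = i).card =
      (G.nE).choose i := by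
    rw [← Finset.powerset_univ, ← Finset.powersetCard_eq_filter,
      Finset.card_powersetCard, Finset.card_univ]; rfl
  rw [← hcard, ← hsplit]
  congr 1
  rw [d]
  congr

end Multigraph

namespace Multigraph
variable (G : Multigraph)

lemma eq_of_connOn_empty (h : G.ConnOn ∅) : ∀ u v : G.V, u = v := by
  intro u v
  induction h u v with
  | refl => rfl
  | tail _ hstep _ => exact absurd hstep (G.stepOn_empty _ _)

end Multigraph

lemma analytic_pos (m t : ℕ) (e : ℕ → ℝ) (ht : t ≤ m) (h0 : ∀ i < t, e i = 0)
    (h1 : 0 < e t) :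
    ∃ x₀ : ℝ, 0 < x₀ ∧ x₀ < 1 ∧ ∀ x : ℝ, 0 < x → x < x₀ →
      0 < ∑ i ∈ Finset.range (m + 1), e i * x ^ i * (1 - x) ^ (m - i) := by
  set g : ℝ → ℝ := fun x => ∑ i ∈ Finset.range (m + 1),
    e i * x ^ (i - t) * (1 - x) ^ (m - i) with hg
  have hgc : Continuous g := by
    apply continuous_finset_sum
    intro i _
    fun_prop
  have hg0 : g 0 = e t := by
    rw [hg]
    simp only
    rw [Finset.sum_eq_single_of_mem t (Finset.mem_range.mpr (by omega))]
    · simp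
    · intro i _ hit
      rcases Nat.lt_or_ge i t with h | h
      · simp [h0 i h]
      · simp [zero_pow (by omega : i - t ≠ 0)]
  have hpos : 0 < g 0 := hg0 ▸ h1
  obtain ⟨δ, hδ, hδ'⟩ := Metric.continuousAt_iff.mp hgc.continuousAt (g 0) hpos
  refine ⟨min (δ / 2) (1 / 2), by positivity, by
    have := min_le_right (δ / 2) (1 / 2); linarith, fun x hx hx' => ?_⟩
  have hxδ : dist x 0 < δ := by
    rw [Real.dist_eq, sub_zero, abs_of_pos hx]
    have := min_le_left (δ / 2) (1 / 2); linarith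
  have hgx : 0 < g x := by
    have h2 := hδ' hxδ
    rw [Real.dist_eq] at h2
    have h3 := abs_lt.mp h2
    linarith [h3.1]
  have hident : ∑ i ∈ Finset.range (m + 1), e i * x ^ i * (1 - x) ^ (m - i)
      = x ^ t * g x := by
    rw [hg, Finset.mul_sum]
    refine Finset.sum_congr rfl fun i _ => ?_
    rcases Nat.lt_or_ge i t with h | h
    · simp [h0 i h]
    · have hxx : x ^ t * x ^ (i - t) = x ^ i := by
        rw [← pow_add]; congr 1; omega
      calc e i * x ^ i * (1 - x) ^ (m - i)
          = e i * (x ^ t * x ^ (i - t)) * (1 - x) ^ (m - i) := by rw [hxx]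
        _ = x ^ t * (e i * x ^ (i - t) * (1 - x) ^ (m - i)) := by ring
  rw [hident]
  positivity

/-- (a) larger edge-connectivity wins for p close to 1;
(b) more spanning trees wins for p close to 0. -/
theorem reliability_near_extremes (n m : ℕ) (G H : Multigraph)
    (hG : memG G n m) (hH : memG H n m) :
    (G.edgeConnectivity < H.edgeConnectivity →
      ∃ p₀ : ℝ, 0 < p₀ ∧ p₀ < 1 ∧
        ∀ p : ℝ, p₀ < p → p < 1 → G.rel p < H.rel p) ∧
    (G.treeCount < H.treeCount →
      ∃ p₀ : ℝ, 0 < p₀ ∧ p₀ < 1 ∧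
        ∀ p : ℝ, 0 < p → p < p₀ → G.rel p < H.rel p) := by
  obtain ⟨hGV, hGE, hGconn⟩ := hG
  obtain ⟨hHV, hHE, hHconn⟩ := hH
  have hdzero : ∀ K : Multigraph, ∀ i, i < K.edgeConnectivity → K.d i = 0 := by
    intro K i hi
    rw [Multigraph.d, Finset.card_eq_zero, Finset.filter_eq_empty_iff]
    rintro F - ⟨hc, hd⟩
    have hmem : i ∈ {j : ℕ | ∃ F : Finset K.E, F.card = j ∧ K.Disconnects F} := ⟨F, hc, hd⟩
    have h2 := Nat.sInf_le hmem
    rw [Multigraph.edgeConnectivity] at hi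
    omega
  constructor
  · -- part (a)
    intro hlt
    have hGne : {i : ℕ | ∃ F : Finset G.E, F.card = i ∧ G.Disconnects F}.Nonempty := by
      by_contra hemp
      rw [Set.not_nonempty_iff_eq_empty] at hemp
      have h1 : ¬ G.Disconnects Finset.univ := fun hd =>
        Set.eq_empty_iff_forall_notMem.mp hemp _ ⟨Finset.univ, rfl, hd⟩
      have h2 : G.ConnOn (Finset.univ \ Finset.univ) := not_not.mp h1
      rw [Finset.sdiff_self] at h2
      have hsub := G.eq_of_connOn_empty h2
      have hn1 : Fintype.card G.V ≤ 1 := Fintype.card_le_one_iff.mpr hsub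
      have hHn1 : Fintype.card H.V ≤ 1 := by
        have : G.nV = Fintype.card G.V := rfl
        have : H.nV = Fintype.card H.V := rfl
        omega
      have hHsub := Fintype.card_le_one_iff.mp hHn1
      have hHset : {i : ℕ | ∃ F : Finset H.E, F.card = i ∧ H.Disconnects F} = ∅ := by
        rw [Set.eq_empty_iff_forall_notMem]
        rintro i ⟨F, -, hd⟩
        exact hd fun u v => hHsub u v ▸ Relation.ReflTransGen.refl
      have hH0 : H.edgeConnectivity = 0 := by
        rw [Multigraph.edgeConnectivity, hHset, Nat.sInf_empty]
      omega
    obtain ⟨F₀, hF₀c, hF₀d⟩ := Nat.sInf_mem hGne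
    set t := G.edgeConnectivity with htdef
    have hts : F₀.card = t := by rw [htdef, Multigraph.edgeConnectivity]; exact hF₀c
    have htm : t ≤ m := by
      rw [← hts, ← hGE]
      simpa [Multigraph.nE, ← Finset.card_univ] using Finset.card_le_univ F₀
    have hdGt : 0 < G.d t :=
      Finset.card_pos.mpr ⟨F₀, Finset.mem_filter.mpr ⟨Finset.mem_univ _, hts, hF₀d⟩⟩
    have h0 : ∀ i < t, ((G.d i : ℝ) - (H.d i)) = 0 := by
      intro i hi
      rw [hdzero G i hi, hdzero H i (hi.trans hlt)]
      simp
    have h1 : 0 < ((G.d t : ℝ) - (H.d t)) := by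
      rw [hdzero H t hlt]
      have : (0 : ℝ) < (G.d t : ℝ) := by exact_mod_cast hdGt
      simpa using this
    obtain ⟨x₀, hx₀0, hx₀1, hx⟩ :=
      analytic_pos m t (fun i => (G.d i : ℝ) - (H.d i)) htm h0 h1
    refine ⟨1 - x₀, by linarith, by linarith, fun p hp hp1 => ?_⟩
    have hxp := hx (1 - p) (by linarith) (by linarith)
    have hdiff : H.rel p - G.rel p = ∑ i ∈ Finset.range (m + 1),
        ((G.d i : ℝ) - (H.d i)) * (1 - p) ^ i * (1 - (1 - p)) ^ (m - i) := by
      rw [Multigraph.rel_eq_sum_compl G p, Multigraph.rel_eq_sum_compl H p, hGE, hHE,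
        ← Finset.sum_sub_distrib]
      refine Finset.sum_congr rfl fun i hi => ?_
      have h2 : (G.nd i : ℝ) + (G.d i : ℝ) = (m.choose i : ℝ) := by
        rw [← hGE]; exact_mod_cast G.nd_add_d i
      have h3 : (H.nd i : ℝ) + (H.d i : ℝ) = (m.choose i : ℝ) := by
        rw [← hHE]; exact_mod_cast H.nd_add_d i
      have h4 : (1 : ℝ) - (1 - p) = p := by ring
      rw [h4]
      linear_combination (p ^ (m - i) * (1 - p) ^ i) * (h3 - h2)
    linarith
  · -- part (b)
    intro hlt
    have hn1 : 1 ≤ n := by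
      have hpos : 0 < H.treeCount := by omega
      rw [Multigraph.treeCount, Finset.card_pos] at hpos
      obtain ⟨S, hS⟩ := hpos
      have := (Finset.mem_filter.mp hS).2.1
      omega
    have htm : n - 1 ≤ m := by
      have h2 := G.nV_le_of_connOn hGconn
      have hc : (Finset.univ : Finset G.E).card = m := by
        rw [← hGE]; exact Finset.card_univ
      omega
    have hcc0 : ∀ K : Multigraph, K.nV = n → ∀ j, j < n - 1 → K.cc j = 0 := by
      intro K hK j hj
      rw [Multigraph.cc, Finset.card_eq_zero, Finset.filter_eq_empty_iff]
      rintro S - ⟨hc, hconn⟩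
      have := K.nV_le_of_connOn hconn
      omega
    have hcct : ∀ K : Multigraph, K.nV = n → K.cc (n - 1) = K.treeCount := by
      intro K hK
      rw [Multigraph.cc, Multigraph.treeCount]
      congr 1
      apply Finset.filter_congr
      intro S _
      constructor
      · rintro ⟨h, hc⟩; exact ⟨by omega, hc⟩
      · rintro ⟨h, hc⟩; exact ⟨by omega, hc⟩
    have h0 : ∀ j < n - 1, ((H.cc j : ℝ) - (G.cc j)) = 0 := by
      intro j hj
      rw [hcc0 G hGV j hj, hcc0 H hHV j hj]
      simp
    have h1 : 0 < ((H.cc (n - 1) : ℝ) - (G.cc (n - 1))) := by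
      rw [hcct G hGV, hcct H hHV]
      have : (G.treeCount : ℝ) < (H.treeCount : ℝ) := by exact_mod_cast hlt
      linarith
    obtain ⟨x₀, hx₀0, hx₀1, hx⟩ :=
      analytic_pos m (n - 1) (fun j => (H.cc j : ℝ) - (G.cc j)) htm h0 h1
    refine ⟨x₀, hx₀0, hx₀1, fun p hp hp' => ?_⟩
    have hxp := hx p hp hp'
    have hdiff : H.rel p - G.rel p = ∑ j ∈ Finset.range (m + 1),
        ((H.cc j : ℝ) - (G.cc j)) * p ^ j * (1 - p) ^ (m - j) := by
      rw [Multigraph.rel_eq_sum G p, Multigraph.rel_eq_sum H p, hGE, hHE,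
        ← Finset.sum_sub_distrib]
      exact Finset.sum_congr rfl fun j _ => by ring
    linarith
end
end

section
/- Let D be a distillation whose edges are assigned nonnegative integer weights that yield a weak subdivision G of D (the weights being chain lengths, with no cycle of D having all weights zero). Then for every s ≠ 2, the number of s-bonds of G equals the sum, over all s-bonds of D, of the product of the weights of the edges of the bond. -/
open Classical Finset

noncomputable section

namespace BondProof

open Multigraph

attribute [reducible] subdivide

variable {M : Multigraph}

lemma mem_cutEdges {A : Finset M.V} {e : M.E} :
    e ∈ M.cutEdges A ↔ ((M.src e ∈ A ∧ M.tgt e ∉ A) ∨ (M.src e ∉ A ∧ M.tgt e ∈ A)) := by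
  simp [Multigraph.cutEdges]

lemma not_mem_cutEdges {A : Finset M.V} {e : M.E} (h : e ∉ M.cutEdges A) :
    (M.src e ∈ A ↔ M.tgt e ∈ A) := by
  rw [mem_cutEdges] at h; tauto

lemma mem_cutEdges_of_not_iff {A : Finset M.V} {e : M.E}
    (h : ¬ (M.src e ∈ A ↔ M.tgt e ∈ A)) : e ∈ M.cutEdges A := by
  rw [mem_cutEdges]; tauto

lemma cut_nonempty_proper {A : Finset M.V} {e : M.E} (he : e ∈ M.cutEdges A) :
    A.Nonempty ∧ A ≠ Finset.univ := by
  rw [mem_cutEdges] at he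
  rcases he with ⟨h1, h2⟩ | ⟨h1, h2⟩
  · exact ⟨⟨_, h1⟩, fun h => h2 (by rw [h]; exact Finset.mem_univ _)⟩
  · exact ⟨⟨_, h2⟩, fun h => h1 (by rw [h]; exact Finset.mem_univ _)⟩

lemma stepOn_symm {S : Finset M.E} {u v : M.V} (h : M.stepOn S u v) : M.stepOn S v u := by
  obtain ⟨e, he, h⟩ := h; exact ⟨e, he, h.symm⟩

lemma rtg_stepOn_symm {S : Finset M.E} {u v : M.V}
    (h : Relation.ReflTransGen (M.stepOn S) u v) : Relation.ReflTransGen (M.stepOn S) v u := by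
  induction h with
  | refl => exact .refl
  | tail _ hstep ih => exact Relation.ReflTransGen.trans (.single (stepOn_symm hstep)) ih

lemma cutEdges_nonempty (hconn : M.Connected) {A : Finset M.V} (h1 : A.Nonempty)
    (h2 : A ≠ Finset.univ) : (M.cutEdges A).Nonempty := by
  obtain ⟨u, hu⟩ := h1
  obtain ⟨v, hv⟩ : ∃ v, v ∉ A := by
    by_contra h; push_neg at h; exact h2 (Finset.eq_univ_iff_forall.2 h)
  have key : ∀ v, Relation.ReflTransGen (M.stepOn Finset.univ) u v → v ∉ A →
      (M.cutEdges A).Nonempty := by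
    intro v hpath
    induction hpath with
    | refl => intro h; exact absurd hu h
    | @tail b c hub hbc ih =>
      intro hc
      by_cases hb : b ∈ A
      · obtain ⟨e, -, he⟩ := hbc
        rcases he with ⟨h1, h2⟩ | ⟨h1, h2⟩
        · exact ⟨e, mem_cutEdges.2 (Or.inl ⟨h1 ▸ hb, h2 ▸ hc⟩)⟩
        · exact ⟨e, mem_cutEdges.2 (Or.inr ⟨h1 ▸ hc, h2 ▸ hb⟩)⟩
      · exact ih hb
  exact key v (hconn u v) hv

variable {D : Multigraph} {w : D.E → ℕ}

lemma chainNode_zero (f : D.E) :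
    chainNode D w f 0 = Sum.inl (Quot.mk (zeroRel D w) (D.src f)) := by
  rw [chainNode, dif_neg (by omega), if_pos rfl]

lemma chainNode_of_ge {f : D.E} {j : ℕ} (h : w f ≤ j) :
    chainNode D w f j = Sum.inl (Quot.mk (zeroRel D w) (D.tgt f)) := by
  rcases Nat.eq_zero_or_pos j with hj | hj
  · subst hj
    have hw : w f = 0 := Nat.le_zero.mp h
    rw [chainNode, dif_neg (by omega), if_pos rfl]
    exact congrArg Sum.inl (Quot.sound ⟨f, hw, rfl, rfl⟩)
  · rw [chainNode, dif_neg (by omega), if_neg (by omega)]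

lemma chainNode_mid {f : D.E} {j : ℕ} (h1 : 0 < j) (h2 : j < w f) :
    chainNode D w f j = Sum.inr ⟨f, ⟨j - 1, by omega⟩⟩ := by
  rw [chainNode, dif_pos ⟨h1, h2⟩]

lemma subdivide_src (f : D.E) (j : Fin (w f)) :
    (subdivide D w).src ⟨f, j⟩ = chainNode D w f j.val := rfl

lemma subdivide_tgt (f : D.E) (j : Fin (w f)) :
    (subdivide D w).tgt ⟨f, j⟩ = chainNode D w f (j.val + 1) := rfl

lemma mem_cutEdges_subdiv {A : Finset (subdivide D w).V} {f : D.E} {j : Fin (w f)} :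
    (⟨f, j⟩ : (subdivide D w).E) ∈ (subdivide D w).cutEdges A ↔
      ¬ (chainNode D w f j.val ∈ A ↔ chainNode D w f (j.val + 1) ∈ A) := by
  rw [mem_cutEdges, subdivide_src, subdivide_tgt]; tauto

lemma chain_same_side {A : Finset (subdivide D w).V} {f : D.E} {a b : ℕ}
    (hab : a ≤ b) (hb : b ≤ w f)
    (h : ∀ j : Fin (w f), a ≤ j.val → j.val < b →
      (⟨f, j⟩ : (subdivide D w).E) ∉ (subdivide D w).cutEdges A) :
    (chainNode D w f a ∈ A ↔ chainNode D w f b ∈ A) := by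
  induction b, hab using Nat.le_induction with
  | base => exact Iff.rfl
  | succ b hab ih =>
    have step : (chainNode D w f b ∈ A ↔ chainNode D w f (b + 1) ∈ A) := by
      have h2 := h ⟨b, by omega⟩ hab (Nat.lt_succ_self b)
      rw [mem_cutEdges_subdiv] at h2
      tauto
    exact (ih (by omega) fun j h1 h2 => h j h1 (by omega)).trans step

lemma chain_reach (f : D.E) : ∀ j, j ≤ w f →
    Relation.ReflTransGen ((subdivide D w).stepOn Finset.univ)
      (chainNode D w f 0) (chainNode D w f j) := by
  intro j
  induction j with
  | zero => intro _; exact .refl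
  | succ j ih =>
    intro hj
    refine (ih (by omega)).tail ?_
    exact ⟨⟨f, ⟨j, by omega⟩⟩, Finset.mem_univ _, Or.inl ⟨rfl, rfl⟩⟩

lemma subdivide_connected (hconn : D.Connected) : (subdivide D w).Connected := by
  have key : ∀ u v : D.V, Relation.ReflTransGen ((subdivide D w).stepOn Finset.univ)
      (Sum.inl (Quot.mk (zeroRel D w) u)) (Sum.inl (Quot.mk (zeroRel D w) v)) := by
    intro u v
    have h := hconn u v
    induction h with
    | refl => exact .refl
    | @tail b c hub hbc ih =>
      refine ih.trans ?_
      obtain ⟨e, -, he⟩ := hbc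
      rcases he with ⟨h1, h2⟩ | ⟨h1, h2⟩
      · subst h1; subst h2
        by_cases hw : w e = 0
        · rw [show Quot.mk (zeroRel D w) (D.src e) = Quot.mk (zeroRel D w) (D.tgt e) from
            Quot.sound ⟨e, hw, rfl, rfl⟩]
        · have h3 := chain_reach (D := D) (w := w) e (w e) le_rfl
          rwa [chainNode_zero, chainNode_of_ge le_rfl] at h3
      · subst h1; subst h2
        by_cases hw : w e = 0
        · rw [show Quot.mk (zeroRel D w) (D.src e) = Quot.mk (zeroRel D w) (D.tgt e) from
            Quot.sound ⟨e, hw, rfl, rfl⟩]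
        · have h3 := chain_reach (D := D) (w := w) e (w e) le_rfl
          rw [chainNode_zero, chainNode_of_ge le_rfl] at h3
          exact rtg_stepOn_symm h3
  have reach_inl : ∀ x : (subdivide D w).V, ∃ u : D.V,
      Relation.ReflTransGen ((subdivide D w).stepOn Finset.univ)
        (Sum.inl (Quot.mk (zeroRel D w) u)) x := by
    intro x
    match x with
    | Sum.inl q =>
      obtain ⟨u, hu⟩ := Quot.exists_rep q
      exact ⟨u, by rw [hu]⟩
    | Sum.inr ⟨f, i⟩ =>
      refine ⟨D.src f, ?_⟩
      have hlt := i.isLt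
      have h1 := chain_reach (D := D) (w := w) f (i.val + 1) (by omega)
      rw [chainNode_zero, chainNode_mid (by omega) (by omega)] at h1
      exact h1
  intro x y
  obtain ⟨u, hu⟩ := reach_inl x
  obtain ⟨v, hv⟩ := reach_inl y
  exact (rtg_stepOn_symm hu).trans ((key u v).trans hv)


def liftSide (D : Multigraph) (w : D.E → ℕ) (A0 : Finset D.V)
    (hsound : ∀ a b : D.V, zeroRel D w a b → ((a ∈ A0) = (b ∈ A0))) (cf : D.E → ℕ) :
    (subdivide D w).V → Prop
  | Sum.inl q => Quot.lift (fun u => u ∈ A0) hsound q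
  | Sum.inr ⟨f, i⟩ => if i.val + 1 ≤ cf f then D.src f ∈ A0 else D.tgt f ∈ A0

lemma lift_cut {A0 : Finset D.V}
    (hsat : ∀ e : D.E, w e = 0 → (D.src e ∈ A0 ↔ D.tgt e ∈ A0))
    (c : D.E → ℕ) (hc : ∀ f ∈ D.cutEdges A0, c f < w f) :
    ∃ A' : Finset (subdivide D w).V,
      (∀ u : D.V, Sum.inl (Quot.mk (zeroRel D w) u) ∈ A' ↔ u ∈ A0) ∧
      ∀ (f : D.E) (j : Fin (w f)),
        ((⟨f, j⟩ : (subdivide D w).E) ∈ (subdivide D w).cutEdges A' ↔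
          f ∈ D.cutEdges A0 ∧ j.val = c f) := by
  classical
  have hsound : ∀ a b : D.V, zeroRel D w a b → ((a ∈ A0) = (b ∈ A0)) := by
    rintro a b ⟨e, hw, h1, h2⟩
    subst h1; subst h2; exact propext (hsat e hw)
  set cf : D.E → ℕ := fun f => if f ∈ D.cutEdges A0 then c f else w f with hcf
  refine ⟨Finset.univ.filter (liftSide D w A0 hsound cf), ?_, ?_⟩
  · intro u
    simp only [Finset.mem_filter, Finset.mem_univ, true_and]
    exact Iff.rfl
  · have hnode : ∀ (f : D.E) (k : ℕ), k ≤ w f →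
        (chainNode D w f k ∈ Finset.univ.filter (liftSide D w A0 hsound cf) ↔
          (if k ≤ cf f then D.src f ∈ A0 else D.tgt f ∈ A0)) := by
      intro f k hk
      simp only [Finset.mem_filter, Finset.mem_univ, true_and]
      rcases Nat.eq_zero_or_pos k with h0 | h0
      · subst h0
        rw [chainNode_zero, if_pos (Nat.zero_le _)]
        exact Iff.rfl
      · rcases Nat.lt_or_ge k (w f) with hlt | hge
        · rw [chainNode_mid h0 hlt]
          show (if (k - 1) + 1 ≤ cf f then D.src f ∈ A0 else D.tgt f ∈ A0) ↔ _
          rw [show k - 1 + 1 = k by omega]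
        · have hkw : k = w f := by omega
          subst hkw
          rw [chainNode_of_ge le_rfl]
          show D.tgt f ∈ A0 ↔ _
          by_cases hfB : f ∈ D.cutEdges A0
          · rw [if_neg (by rw [hcf]; simp only [if_pos hfB]; have := hc f hfB; omega)]
          · rw [if_pos (by rw [hcf]; simp only [if_neg hfB]; exact le_rfl)]
            exact (not_mem_cutEdges hfB).symm
    intro f j
    rw [mem_cutEdges_subdiv, hnode f j.val (le_of_lt j.isLt), hnode f (j.val + 1) j.isLt]
    by_cases hfB : f ∈ D.cutEdges A0
    · have hcf1 : cf f = c f := by rw [hcf]; exact if_pos hfB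
      have hxor : ¬ (D.src f ∈ A0 ↔ D.tgt f ∈ A0) := by
        rw [mem_cutEdges] at hfB; tauto
      rcases Nat.lt_trichotomy j.val (c f) with h | h | h
      · rw [if_pos (by omega), if_pos (by omega)]
        simp only [iff_self, not_true_eq_false, false_iff]
        rintro ⟨-, h'⟩; omega
      · rw [if_pos (by omega), if_neg (by omega)]
        exact iff_of_true hxor ⟨hfB, h⟩
      · rw [if_neg (by omega), if_neg (by omega)]
        simp only [iff_self, not_true_eq_false, false_iff]
        rintro ⟨-, h'⟩; omega
    · have hcf1 : cf f = w f := by rw [hcf]; exact if_neg hfB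
      rw [if_pos (by omega), if_pos (by have := j.isLt; omega)]
      simp only [iff_self, not_true_eq_false, false_iff]
      rintro ⟨h', -⟩; exact hfB h'

lemma proj_cut {A' : Finset (subdivide D w).V}
    (huniq : ∀ (f : D.E) (j j' : Fin (w f)),
      (⟨f, j⟩ : (subdivide D w).E) ∈ (subdivide D w).cutEdges A' →
      (⟨f, j'⟩ : (subdivide D w).E) ∈ (subdivide D w).cutEdges A' → j = j')
    (f : D.E) :
    f ∈ D.cutEdges (Finset.univ.filter fun u => Sum.inl (Quot.mk (zeroRel D w) u) ∈ A') ↔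
      ∃ j : Fin (w f), (⟨f, j⟩ : (subdivide D w).E) ∈ (subdivide D w).cutEdges A' := by
  classical
  have hmem : ∀ u : D.V,
      (u ∈ Finset.univ.filter fun u => Sum.inl (Quot.mk (zeroRel D w) u) ∈ A') ↔
      Sum.inl (Quot.mk (zeroRel D w) u) ∈ A' := by
    intro u; simp
  have hend : f ∈ D.cutEdges (Finset.univ.filter fun u =>
        Sum.inl (Quot.mk (zeroRel D w) u) ∈ A') ↔
      ¬ (chainNode D w f 0 ∈ A' ↔ chainNode D w f (w f) ∈ A') := by
    rw [mem_cutEdges, chainNode_zero, chainNode_of_ge le_rfl, hmem, hmem]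
    tauto
  rw [hend]
  constructor
  · intro hf
    by_contra hno
    push_neg at hno
    exact hf (chain_same_side (Nat.zero_le _) le_rfl (fun j _ _ => hno j))
  · rintro ⟨j, hj⟩
    have h1 : chainNode D w f 0 ∈ A' ↔ chainNode D w f j.val ∈ A' :=
      chain_same_side (Nat.zero_le _) (le_of_lt j.isLt) (fun j' _ hlt hmem' => by
        cases huniq f j' j hmem' hj; omega)
    have h2 : chainNode D w f (j.val + 1) ∈ A' ↔ chainNode D w f (w f) ∈ A' :=
      chain_same_side (by omega) le_rfl (fun j' hge _ hmem' => by
        cases huniq f j' j hmem' hj; omega)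
    have h3 := mem_cutEdges_subdiv.mp hj
    tauto


lemma mem_imageF {B : Finset D.E} {inst : DecidableEq ((f : D.E) × Fin (w f))}
    (g : ∀ e ∈ B, Fin (w e)) (ε : (subdivide D w).E) :
    ε ∈ @Finset.image _ _ inst (fun e => (⟨e.1, g e.1 e.2⟩ : (subdivide D w).E)) B.attach ↔
      ∃ h : ε.1 ∈ B, ε.2 = g ε.1 h := by
  obtain ⟨f, k⟩ := ε
  simp only [Finset.mem_image, Finset.mem_attach, true_and, Subtype.exists]
  constructor
  · rintro ⟨a, ha, heq⟩
    obtain ⟨h1, h2⟩ := Sigma.mk.inj_iff.mp heq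
    subst h1
    exact ⟨ha, (eq_of_heq h2).symm⟩
  · rintro ⟨h, hv⟩
    exact ⟨f, h, by rw [hv]⟩

def chainEmb (B : Finset D.E) (g : ∀ e ∈ B, Fin (w e)) :
    {x // x ∈ B} ↪ (subdivide D w).E :=
  ⟨fun e => ⟨e.1, g e.1 e.2⟩, fun a b hab => Subtype.ext (congrArg Sigma.fst hab)⟩

lemma mem_mapF {B : Finset D.E} (g : ∀ e ∈ B, Fin (w e)) (ε : (subdivide D w).E) :
    ε ∈ B.attach.map (chainEmb B g) ↔ ∃ h : ε.1 ∈ B, ε.2 = g ε.1 h := by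
  obtain ⟨f, k⟩ := ε
  simp only [Finset.mem_map, Finset.mem_attach, true_and, Subtype.exists, chainEmb,
    Function.Embedding.coeFn_mk]
  constructor
  · rintro ⟨a, ha, heq⟩
    obtain ⟨h1, h2⟩ := Sigma.mk.inj_iff.mp heq
    subst h1
    exact ⟨ha, (eq_of_heq h2).symm⟩
  · rintro ⟨h, hv⟩
    exact ⟨f, h, by rw [hv]; rfl⟩

lemma lifted_isBond (hconn : D.Connected) {B : Finset D.E} (hB : D.IsBond B)
    (g : ∀ e ∈ B, Fin (w e)) :
    (subdivide D w).IsBond (B.attach.map (chainEmb B g)) := by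
  classical
  suffices hsuf : ∀ F : Finset (subdivide D w).E,
      (∀ ε : (subdivide D w).E, ε ∈ F ↔ ∃ h : ε.1 ∈ B, ε.2 = g ε.1 h) →
      (subdivide D w).IsBond F by
    exact hsuf _ (mem_mapF g)
  intro F hmemF
  obtain ⟨⟨A, hA1, hA2, hAB⟩, hmin⟩ := hB
  have hBiff : ∀ f, f ∈ B ↔ f ∈ D.cutEdges A := fun f => by rw [hAB]
  have hsat : ∀ e : D.E, w e = 0 → (D.src e ∈ A ↔ D.tgt e ∈ A) := by
    intro e hw
    refine not_mem_cutEdges (fun hmem => ?_)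
    exact absurd (g e ((hBiff e).mpr hmem)).isLt (by omega)
  set c : D.E → ℕ := fun f => if h : f ∈ B then (g f h).val else 0 with hcdef
  have hc : ∀ f ∈ D.cutEdges A, c f < w f := by
    intro f hf
    have hfB := (hBiff f).mpr hf
    rw [hcdef]; simp only [dif_pos hfB]; exact (g f hfB).isLt
  obtain ⟨A', hA'mem, hA'cut⟩ := lift_cut hsat c hc
  have hFeq : (subdivide D w).cutEdges A' = F := by
    ext ε
    obtain ⟨f, j⟩ := ε
    rw [hA'cut f j, hmemF ⟨f, j⟩]
    show (f ∈ D.cutEdges A ∧ j.val = c f) ↔ ∃ h : f ∈ B, j = g f h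
    have hcval : ∀ hfB : f ∈ B, c f = (g f hfB).val := by
      intro hfB; rw [hcdef]; simp only [dif_pos hfB]
    constructor
    · rintro ⟨hc1, hc2⟩
      have hfB := (hBiff f).mpr hc1
      exact ⟨hfB, Fin.ext (by rw [hc2, hcval hfB])⟩
    · rintro ⟨hfB, hv⟩
      exact ⟨(hBiff f).mp hfB, by rw [hv, hcval hfB]⟩
  constructor
  · refine ⟨A', ?_, ?_, hFeq.symm⟩
    · obtain ⟨u, hu⟩ := hA1
      exact ⟨_, (hA'mem u).mpr hu⟩
    · obtain ⟨v, hv⟩ : ∃ v, v ∉ A := by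
        by_contra h; push_neg at h; exact hA2 (Finset.eq_univ_iff_forall.2 h)
      intro h
      exact hv ((hA'mem v).mp (by rw [h]; exact Finset.mem_univ _))
  · intro F' hsub hcut'
    obtain ⟨A0', h1, h2, hF'⟩ := hcut'
    subst hF'
    have huniq : ∀ (f : D.E) (j j' : Fin (w f)),
        (⟨f, j⟩ : (subdivide D w).E) ∈ (subdivide D w).cutEdges A0' →
        (⟨f, j'⟩ : (subdivide D w).E) ∈ (subdivide D w).cutEdges A0' → j = j' := by
      intro f j j' hj hj'
      obtain ⟨hb, hv⟩ := (hmemF _).mp (hsub hj)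
      obtain ⟨hb', hv'⟩ := (hmemF _).mp (hsub hj')
      exact hv.trans hv'.symm
    have hproj := proj_cut huniq
    have hB'sub : D.cutEdges (Finset.univ.filter fun u =>
        Sum.inl (Quot.mk (zeroRel D w) u) ∈ A0') ⊆ B := by
      intro f hf
      obtain ⟨j, hj⟩ := (hproj f).mp hf
      exact ((hmemF _).mp (hsub hj)).1
    obtain ⟨ε, hε⟩ := cutEdges_nonempty (subdivide_connected hconn) h1 h2
    obtain ⟨f0, j0⟩ := ε
    have hf0 : f0 ∈ D.cutEdges (Finset.univ.filter fun u =>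
        Sum.inl (Quot.mk (zeroRel D w) u) ∈ A0') := (hproj f0).mpr ⟨j0, hε⟩
    obtain ⟨hA0ne, hA0pr⟩ := cut_nonempty_proper hf0
    have hBeq : D.cutEdges (Finset.univ.filter fun u =>
        Sum.inl (Quot.mk (zeroRel D w) u) ∈ A0') = B :=
      hmin _ hB'sub ⟨_, hA0ne, hA0pr, rfl⟩
    apply Finset.Subset.antisymm hsub
    intro ε hε2
    obtain ⟨f, j⟩ := ε
    obtain ⟨hb, hv⟩ := (hmemF _).mp hε2
    have hf : f ∈ D.cutEdges (Finset.univ.filter fun u =>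
        Sum.inl (Quot.mk (zeroRel D w) u) ∈ A0') := by rw [hBeq]; exact hb
    obtain ⟨j', hj'⟩ := (hproj f).mp hf
    have hjj : j' = j := by
      obtain ⟨hb2, hv2⟩ := (hmemF _).mp (hsub hj')
      exact hv2.trans hv.symm
    rwa [hjj] at hj'


lemma sigmaE_eq_iff {f f' : D.E} {k : Fin (w f)} {k' : Fin (w f')} :
    ((⟨f, k⟩ : (subdivide D w).E) = ⟨f', k'⟩) ↔ f = f' ∧ k.val = k'.val := by
  constructor
  · intro h
    obtain ⟨h1, h2⟩ := Sigma.mk.inj_iff.mp h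
    subst h1
    exact ⟨rfl, congrArg Fin.val (eq_of_heq h2)⟩
  · rintro ⟨rfl, h2⟩
    rw [Fin.ext h2]

lemma bond_chain_unique {F : Finset (subdivide D w).E}
    (hbond : (subdivide D w).IsBond F) (hcard : F.card ≠ 2) :
    ∀ (f : D.E) (j j' : Fin (w f)),
      (⟨f, j⟩ : (subdivide D w).E) ∈ F → (⟨f, j'⟩ : (subdivide D w).E) ∈ F → j = j' := by
  classical
  have main : ∀ (f : D.E) (j j' : Fin (w f)), j.val < j'.val →
      (⟨f, j⟩ : (subdivide D w).E) ∈ F → (⟨f, j'⟩ : (subdivide D w).E) ∈ F → False := by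
    intro f j j' hlt hj hj'
    have hlt' := j'.isLt
    set A2 : Finset (subdivide D w).V := Finset.univ.filter (fun x =>
      match x with
      | Sum.inl _ => False
      | Sum.inr p => p.1 = f ∧ j.val ≤ p.2.val ∧ p.2.val < j'.val) with hA2def
    have hnode : ∀ k : ℕ, k ≤ w f →
        (chainNode D w f k ∈ A2 ↔ (j.val + 1 ≤ k ∧ k ≤ j'.val)) := by
      intro k hk
      rcases Nat.eq_zero_or_pos k with h0 | h0
      · subst h0
        rw [chainNode_zero, hA2def]
        simp only [Finset.mem_filter, Finset.mem_univ, true_and]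
        exact iff_of_false (fun h => h) (by omega)
      · rcases Nat.lt_or_ge k (w f) with hltk | hgek
        · rw [chainNode_mid h0 hltk, hA2def]
          simp only [Finset.mem_filter, Finset.mem_univ, true_and]
          omega
        · rw [chainNode_of_ge hgek, hA2def]
          simp only [Finset.mem_filter, Finset.mem_univ, true_and]
          exact iff_of_false (fun h => h) (by omega)
    have hother : ∀ (f2 : D.E), f2 ≠ f → ∀ k : ℕ, chainNode D w f2 k ∉ A2 := by
      intro f2 hne k
      rcases Nat.eq_zero_or_pos k with h0 | h0
      · subst h0; rw [chainNode_zero, hA2def]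
        simp only [Finset.mem_filter, Finset.mem_univ, true_and]
        exact fun h => h
      · rcases Nat.lt_or_ge k (w f2) with hltk | hgek
        · rw [chainNode_mid h0 hltk, hA2def]
          simp only [Finset.mem_filter, Finset.mem_univ, true_and]
          intro h
          exact hne h.1
        · rw [chainNode_of_ge hgek, hA2def]
          simp only [Finset.mem_filter, Finset.mem_univ, true_and]
          exact fun h => h
    have hpair : (subdivide D w).cutEdges A2 =
        {(⟨f, j⟩ : (subdivide D w).E), ⟨f, j'⟩} := by
      ext ε
      obtain ⟨f2, k⟩ := ε
      rw [mem_cutEdges_subdiv, Finset.mem_insert, Finset.mem_singleton]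
      by_cases hf2 : f2 = f
      · subst hf2
        rw [hnode k.val (le_of_lt k.isLt), hnode (k.val + 1) k.isLt]
        have hkl := k.isLt
        constructor
        · intro h
          by_contra hno
          push_neg at hno
          have e1 : k.val ≠ j.val := fun hv => hno.1 (sigmaE_eq_iff.mpr ⟨rfl, hv⟩)
          have e2 : k.val ≠ j'.val := fun hv => hno.2 (sigmaE_eq_iff.mpr ⟨rfl, hv⟩)
          exact h (by omega)
        · rintro (h | h) <;> obtain ⟨-, hv⟩ := sigmaE_eq_iff.mp h <;> omega
      · have n1 := hother f2 hf2 k.val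
        have n2 := hother f2 hf2 (k.val + 1)
        constructor
        · intro h; exact absurd (iff_of_false n1 n2) h
        · rintro (h | h) <;> exact absurd (sigmaE_eq_iff.mp h).1 hf2
    have hsubpair : ({(⟨f, j⟩ : (subdivide D w).E), ⟨f, j'⟩} : Finset _) ⊆ F := by
      intro ε hε
      rcases Finset.mem_insert.mp hε with rfl | hε2
      · exact hj
      · rw [Finset.mem_singleton] at hε2; rw [hε2]; exact hj'
    have hA2ne : A2.Nonempty := by
      refine ⟨Sum.inr ⟨f, ⟨j.val, by omega⟩⟩, ?_⟩
      rw [hA2def]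
      simp only [Finset.mem_filter, Finset.mem_univ, true_and]
      omega
    have hA2pr : A2 ≠ Finset.univ := by
      intro h
      have hmem2 : (Sum.inl (Quot.mk (zeroRel D w) (D.src f)) : (subdivide D w).V) ∈ A2 := by
        rw [h]; exact Finset.mem_univ _
      rw [hA2def] at hmem2
      simp only [Finset.mem_filter, Finset.mem_univ, true_and] at hmem2
    have hFeq := hbond.2 _ hsubpair ⟨A2, hA2ne, hA2pr, hpair.symm⟩
    apply hcard
    rw [← hFeq, Finset.card_insert_of_notMem, Finset.card_singleton]
    rw [Finset.mem_singleton]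
    intro h
    obtain ⟨-, h2⟩ := sigmaE_eq_iff.mp h
    omega
  intro f j j' hj hj'
  rcases Nat.lt_trichotomy j.val j'.val with h | h | h
  · exact (main f j j' h hj hj').elim
  · exact Fin.ext h
  · exact (main f j' j h hj' hj).elim

lemma bond_structure (hconn : D.Connected) {F : Finset (subdivide D w).E}
    (hbond : (subdivide D w).IsBond F) (hcard : F.card ≠ 2) :
    ∃ (B : Finset D.E) (g : ∀ e ∈ B, Fin (w e)),
      D.IsBond B ∧
      (∀ ε : (subdivide D w).E, ε ∈ F ↔ ∃ h : ε.1 ∈ B, ε.2 = g ε.1 h) := by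
  classical
  have huniqF : ∀ (f : D.E) (j j' : Fin (w f)),
      (⟨f, j⟩ : (subdivide D w).E) ∈ F → (⟨f, j'⟩ : (subdivide D w).E) ∈ F → j = j' :=
    bond_chain_unique hbond hcard
  obtain ⟨⟨A', h1, h2, hF⟩, hmin⟩ := hbond
  subst hF
  have hproj := proj_cut huniqF
  obtain ⟨g0, hg0⟩ : ∃ g0 : (f : D.E) → f ∈ D.cutEdges (Finset.univ.filter fun u =>
        Sum.inl (Quot.mk (zeroRel D w) u) ∈ A') → Fin (w f),
      ∀ f hf, (⟨f, g0 f hf⟩ : (subdivide D w).E) ∈ (subdivide D w).cutEdges A' := by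
    choose g0 hg0 using fun f hf => (hproj f).mp hf
    exact ⟨g0, hg0⟩
  refine ⟨_, g0, ⟨?_, ?_⟩, ?_⟩
  · obtain ⟨ε, hε⟩ := cutEdges_nonempty (subdivide_connected hconn) h1 h2
    obtain ⟨f0, j0⟩ := ε
    obtain ⟨hne, hpr⟩ := cut_nonempty_proper ((hproj f0).mpr ⟨j0, hε⟩)
    exact ⟨_, hne, hpr, rfl⟩
  · intro B0 hsub hcut0
    obtain ⟨A1, g1, g2, hB0⟩ := hcut0
    subst hB0
    have hzero : ∀ e : D.E, w e = 0 → (D.src e ∈ A1 ↔ D.tgt e ∈ A1) := by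
      intro e hw
      refine not_mem_cutEdges (fun hmem => ?_)
      obtain ⟨jj, hjj⟩ := (hproj e).mp (hsub hmem)
      exact absurd jj.isLt (by omega)
    set c : D.E → ℕ := fun f => if h : f ∈ D.cutEdges (Finset.univ.filter fun u =>
        Sum.inl (Quot.mk (zeroRel D w) u) ∈ A') then (g0 f h).val else 0 with hcdef
    have hcval : ∀ (f : D.E) (hf : f ∈ D.cutEdges (Finset.univ.filter fun u =>
        Sum.inl (Quot.mk (zeroRel D w) u) ∈ A')), c f = (g0 f hf).val := by
      intro f hf; rw [hcdef]; simp only [dif_pos hf]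
    have hc : ∀ f ∈ D.cutEdges A1, c f < w f := by
      intro f hf
      rw [hcval f (hsub hf)]
      exact (g0 f (hsub hf)).isLt
    obtain ⟨A1', hmem', hcut'⟩ := lift_cut hzero c hc
    have hF0sub : (subdivide D w).cutEdges A1' ⊆ (subdivide D w).cutEdges A' := by
      intro ε hε
      obtain ⟨f, k⟩ := ε
      obtain ⟨hf1, hk⟩ := (hcut' f k).mp hε
      have hfB := hsub hf1
      have hkeq : k = g0 f hfB := Fin.ext (by rw [hk, hcval f hfB])
      rw [hkeq]
      exact hg0 f hfB
    have hF0cut : (subdivide D w).IsCut ((subdivide D w).cutEdges A1') := by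
      refine ⟨A1', ?_, ?_, rfl⟩
      · obtain ⟨u, hu⟩ := g1
        exact ⟨_, (hmem' u).mpr hu⟩
      · obtain ⟨v, hv⟩ : ∃ v, v ∉ A1 := by
          by_contra h; push_neg at h; exact g2 (Finset.eq_univ_iff_forall.2 h)
        intro h
        exact hv ((hmem' v).mp (by rw [h]; exact Finset.mem_univ _))
    have hF0eq := hmin _ hF0sub hF0cut
    apply Finset.Subset.antisymm hsub
    intro f hf
    obtain ⟨j, hj⟩ := (hproj f).mp hf
    rw [← hF0eq] at hj
    exact ((hcut' f j).mp hj).1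
  · intro ε
    obtain ⟨f, k⟩ := ε
    show _ ↔ ∃ h : f ∈ _, k = g0 f h
    constructor
    · intro hε
      have hf := (hproj f).mpr ⟨k, hε⟩
      exact ⟨hf, huniqF f k (g0 f hf) hε (hg0 f hf)⟩
    · rintro ⟨hf, hv⟩
      rw [hv]
      exact hg0 f hf


def isoSymm {G H : Multigraph} (φ : MGIso G H) : MGIso H G :=
  ⟨φ.vMap.symm, φ.eMap.symm, fun e => by
    have h := φ.ends_eq (φ.eMap.symm e)
    rw [Equiv.apply_symm_apply] at h
    rcases h with ⟨h1, h2⟩ | ⟨h1, h2⟩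
    · exact Or.inl ⟨by rw [h1, Equiv.symm_apply_apply], by rw [h2, Equiv.symm_apply_apply]⟩
    · exact Or.inr ⟨by rw [h2, Equiv.symm_apply_apply], by rw [h1, Equiv.symm_apply_apply]⟩⟩

lemma cutEdges_map {G H : Multigraph} (φ : MGIso G H) (A : Finset G.V) :
    H.cutEdges (A.map φ.vMap.toEmbedding) = (G.cutEdges A).map φ.eMap.toEmbedding := by
  ext e'
  have h := φ.ends_eq (φ.eMap.symm e')
  rw [Equiv.apply_symm_apply] at h
  rw [Finset.mem_map_equiv, mem_cutEdges, mem_cutEdges]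
  rcases h with ⟨h1, h2⟩ | ⟨h1, h2⟩ <;>
    rw [h1, h2] <;>
    simp only [Finset.mem_map_equiv, Equiv.symm_apply_apply] <;> tauto

lemma isCut_map {G H : Multigraph} (φ : MGIso G H) {F : Finset G.E} (h : G.IsCut F) :
    H.IsCut (F.map φ.eMap.toEmbedding) := by
  obtain ⟨A, h1, h2, rfl⟩ := h
  refine ⟨A.map φ.vMap.toEmbedding, h1.map, ?_, (cutEdges_map φ A).symm⟩
  obtain ⟨v, hv⟩ : ∃ v, v ∉ A := by
    by_contra hc; push_neg at hc; exact h2 (Finset.eq_univ_iff_forall.2 hc)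
  intro huniv
  apply hv
  have hm : φ.vMap v ∈ A.map φ.vMap.toEmbedding := by rw [huniv]; exact Finset.mem_univ _
  rwa [Finset.mem_map_equiv, Equiv.symm_apply_apply] at hm

lemma map_map_symm {G H : Multigraph} (φ : MGIso G H) (F : Finset H.E) :
    (F.map φ.eMap.symm.toEmbedding).map φ.eMap.toEmbedding = F := by
  ext e
  simp [Finset.mem_map_equiv]

lemma isBond_map {G H : Multigraph} (φ : MGIso G H) {F : Finset G.E} (h : G.IsBond F) :
    H.IsBond (F.map φ.eMap.toEmbedding) := by
  obtain ⟨hcut, hmin⟩ := h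
  refine ⟨isCut_map φ hcut, ?_⟩
  intro F' hsub hcut'
  have hsub' : F'.map φ.eMap.symm.toEmbedding ⊆ F := by
    intro e he
    rw [Finset.mem_map_equiv, Equiv.symm_symm] at he
    have h2 := hsub he
    rwa [Finset.mem_map_equiv, Equiv.symm_apply_apply] at h2
  have heq := hmin _ hsub' (isCut_map (isoSymm φ) hcut')
  rw [← heq]
  exact (map_map_symm φ F').symm

lemma bondCount_eq_of_iso {G H : Multigraph} (hiso : IsIso G H) (s : ℕ) :
    G.bondCount s = H.bondCount s := by
  classical
  obtain ⟨φ⟩ := hiso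
  unfold Multigraph.bondCount
  refine Finset.card_bij (fun F _ => F.map φ.eMap.toEmbedding) ?_ ?_ ?_
  · intro F hF
    rw [Finset.mem_filter] at hF ⊢
    exact ⟨Finset.mem_univ _, by rw [Finset.card_map]; exact hF.2.1, isBond_map φ hF.2.2⟩
  · intro F1 h1 F2 h2 heq
    exact Finset.map_injective φ.eMap.toEmbedding heq
  · intro F' hF'
    rw [Finset.mem_filter] at hF'
    refine ⟨F'.map φ.eMap.symm.toEmbedding, ?_, map_map_symm φ F'⟩
    rw [Finset.mem_filter]
    refine ⟨Finset.mem_univ _, ?_, ?_⟩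
    · rw [Finset.card_map]; exact hF'.2.1
    · exact isBond_map (isoSymm φ) hF'.2.2


lemma image_fst_eq {F : Finset (subdivide D w).E} {B : Finset D.E} (g : ∀ e ∈ B, Fin (w e))
    (hmemF : ∀ ε : (subdivide D w).E, ε ∈ F ↔ ∃ h : ε.1 ∈ B, ε.2 = g ε.1 h) :
    F.image Sigma.fst = B := by
  classical
  ext f
  simp only [Finset.mem_image]
  constructor
  · rintro ⟨ε, hε, rfl⟩
    obtain ⟨h, -⟩ := (hmemF ε).mp hε
    exact h
  · intro hf
    exact ⟨⟨f, g f hf⟩, (hmemF _).mpr ⟨hf, rfl⟩, rfl⟩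

lemma card_eq_of_memF {F : Finset (subdivide D w).E} {B : Finset D.E} (g : ∀ e ∈ B, Fin (w e))
    (hmemF : ∀ ε : (subdivide D w).E, ε ∈ F ↔ ∃ h : ε.1 ∈ B, ε.2 = g ε.1 h) :
    B.card = F.card := by
  classical
  rw [← image_fst_eq g hmemF]
  apply Finset.card_image_of_injOn
  intro ε hε ε' hε' hfst
  obtain ⟨f, k⟩ := ε
  obtain ⟨f', k'⟩ := ε'
  have hff : f = f' := hfst
  subst hff
  obtain ⟨h1, hv1⟩ := (hmemF _).mp hε
  obtain ⟨h2, hv2⟩ := (hmemF _).mp hε'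
  rw [show k = k' from hv1.trans hv2.symm]


end BondProof


/-- bond counting in a weak subdivision: for s ≠ 2, the number of
s-bonds of G equals the sum over the s-bonds of D of the products of the weights. -/
theorem bond_count_weak_subdivision (D : Multigraph) (hconn : D.Connected)
    (hdist : ∀ v : D.V, D.deg v ≠ 2) (w : D.E → ℕ) (hza : ZeroAcyclic D w)
    (G : Multigraph) (hG : IsWeakSubdivision G D w) (s : ℕ) (hs : s ≠ 2) :
    G.bondCount s =
      ∑ B ∈ (Finset.univ : Finset (Finset D.E)).filter
          (fun B => B.card = s ∧ D.IsBond B),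
        ∏ e ∈ B, w e := by
  classical
  obtain ⟨hza2, hiso⟩ := hG
  rw [BondProof.bondCount_eq_of_iso hiso s]
  unfold Multigraph.bondCount
  have hmaps : ∀ F ∈ (Finset.univ : Finset (Finset (subdivide D w).E)).filter
      (fun F => F.card = s ∧ (subdivide D w).IsBond F),
      F.image Sigma.fst ∈ (Finset.univ : Finset (Finset D.E)).filter
        (fun B => B.card = s ∧ D.IsBond B) := by
    intro F hF
    rw [Finset.mem_filter] at hF ⊢
    obtain ⟨-, hFcard, hFbond⟩ := hF
    obtain ⟨B, g, hBbond, hmemF⟩ :=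
      BondProof.bond_structure hconn hFbond (by rw [hFcard]; exact hs)
    rw [BondProof.image_fst_eq g hmemF]
    exact ⟨Finset.mem_univ _, by rw [BondProof.card_eq_of_memF g hmemF]; exact hFcard, hBbond⟩
  rw [Finset.card_eq_sum_card_fiberwise hmaps]
  apply Finset.sum_congr rfl
  intro B hB
  rw [Finset.mem_filter] at hB
  obtain ⟨-, hBcard, hBbond⟩ := hB
  have hprod : ∏ e ∈ B, w e = (B.pi (fun e => (Finset.univ : Finset (Fin (w e))))).card := by
    rw [Finset.card_pi]
    exact Finset.prod_congr rfl (fun e _ => by simp)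
  rw [hprod]
  refine (Finset.card_bij
    (fun g _ => B.attach.map (BondProof.chainEmb B g)) ?_ ?_ ?_).symm
  · intro g hg
    simp only [Finset.mem_filter, Finset.mem_univ, true_and]
    have hcardim : (B.attach.map (BondProof.chainEmb B g)).card = s := by
      rw [Finset.card_map, Finset.card_attach]; exact hBcard
    refine ⟨⟨hcardim, BondProof.lifted_isBond hconn hBbond g⟩, ?_⟩
    exact BondProof.image_fst_eq g (BondProof.mem_mapF g)
  · intro g1 hg1 g2 hg2 heq
    have heq2 : B.attach.map (BondProof.chainEmb B g1) =
        B.attach.map (BondProof.chainEmb B g2) := heq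
    funext e he
    have h1 : (⟨e, g1 e he⟩ : (subdivide D w).E) ∈
        B.attach.map (BondProof.chainEmb B g1) :=
      (BondProof.mem_mapF g1 _).mpr ⟨he, rfl⟩
    rw [heq2] at h1
    obtain ⟨h', hv⟩ := (BondProof.mem_mapF g2 _).mp h1
    exact hv
  · intro F hF
    simp only [Finset.mem_filter, Finset.mem_univ, true_and] at hF
    obtain ⟨⟨hFcard, hFbond⟩, hfib⟩ := hF
    obtain ⟨B₂, g₂, hB₂bond, hmemF₂⟩ :=
      BondProof.bond_structure hconn hFbond (by rw [hFcard]; exact hs)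
    have hBB : B₂ = B := by rw [← BondProof.image_fst_eq g₂ hmemF₂, hfib]
    subst hBB
    refine ⟨g₂, by simp [Finset.mem_pi], ?_⟩
    ext ε
    rw [BondProof.mem_mapF g₂ ε]
    exact (hmemF₂ ε).symm
end
end

section
/- If G and H are equivalent graphs, each with m edges, then d_i(G) = d_i(H) for every i ∈ {1, …, m}; consequently R(G,p) = R(H,p) for all p ∈ (0,1). -/
open Classical Finset

noncomputable section

section Aux

open Relation Multigraph

variable {K : Multigraph}

lemma stepOn_symm {S : Finset K.E} {u v : K.V} (h : K.stepOn S u v) : K.stepOn S v u := by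
  obtain ⟨e, he, h⟩ := h
  exact ⟨e, he, h.symm⟩

lemma reach_symm {S : Finset K.E} {u v : K.V}
    (h : Relation.ReflTransGen (K.stepOn S) u v) :
    Relation.ReflTransGen (K.stepOn S) v u := by
  induction h with
  | refl => exact .refl
  | tail _ hst ih => exact .trans (.single (stepOn_symm hst)) ih

lemma reach_mono {S T : Finset K.E} (hST : S ⊆ T) {u v : K.V}
    (h : Relation.ReflTransGen (K.stepOn S) u v) :
    Relation.ReflTransGen (K.stepOn T) u v := by
  refine Relation.ReflTransGen.mono (fun a b hab => ?_) _ _ h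
  obtain ⟨e, he, h⟩ := hab
  exact ⟨e, hST he, h⟩

/-- Transfer of connectivity along an isomorphism. -/
lemma iso_connOn {K L : Multigraph} (φ : MGIso K L) (S : Finset K.E) :
    K.ConnOn S ↔ L.ConnOn (S.map φ.eMap.toEmbedding) := by
  have step1 : ∀ u v, K.stepOn S u v → L.stepOn (S.map φ.eMap.toEmbedding) (φ.vMap u) (φ.vMap v) := by
    rintro u v ⟨e, he, h⟩
    refine ⟨φ.eMap e, Finset.mem_map_of_mem _ he, ?_⟩
    rcases φ.ends_eq e with ⟨h1, h2⟩ | ⟨h1, h2⟩ <;> rcases h with ⟨rfl, rfl⟩ | ⟨rfl, rfl⟩ <;> simp [h1, h2]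
  have step2 : ∀ u v, L.stepOn (S.map φ.eMap.toEmbedding) u v →
      K.stepOn S (φ.vMap.symm u) (φ.vMap.symm v) := by
    rintro u v ⟨f, hf, h⟩
    rw [Finset.mem_map_equiv] at hf
    refine ⟨φ.eMap.symm f, hf, ?_⟩
    rcases φ.ends_eq (φ.eMap.symm f) with ⟨h1, h2⟩ | ⟨h1, h2⟩ <;>
      simp only [Equiv.apply_symm_apply] at h1 h2 <;>
      rcases h with ⟨rfl, rfl⟩ | ⟨rfl, rfl⟩ <;>
      simp [h1, h2]
  constructor
  · intro hc u v
    have := Relation.ReflTransGen.lift φ.vMap (fun a b => step1 a b) _ _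
      (hc (φ.vMap.symm u) (φ.vMap.symm v))
    simpa [Function.onFun] using this
  · intro hc u v
    have := Relation.ReflTransGen.lift φ.vMap.symm (fun a b => step2 a b) _ _
      (hc (φ.vMap u) (φ.vMap v))
    simpa [Function.onFun] using this

lemma mk_eq_reach {x : K.E} {a b : K.V}
    (h : Quot.mk (contractRel K x) a = Quot.mk (contractRel K x) b) :
    Relation.ReflTransGen (K.stepOn {x}) a b := by
  rw [Quot.eq] at h
  induction h with
  | rel a b hab => exact .single ⟨x, Finset.mem_singleton_self x, Or.inl ⟨hab.1.symm, hab.2.symm⟩⟩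
  | refl => exact .refl
  | symm _ _ _ ih => exact reach_symm ih
  | trans _ _ _ _ _ ih1 ih2 => exact ih1.trans ih2

/-- Connectivity of a contraction in terms of the original graph. -/
lemma contract_connOn (x : K.E) (S : Finset {f : K.E // f ≠ x}) :
    (K.contract x).ConnOn S ↔
      K.ConnOn (insert x (S.map (Function.Embedding.subtype _))) := by
  set T : Finset K.E := insert x (S.map (Function.Embedding.subtype _)) with hT
  have hxT : x ∈ T := Finset.mem_insert_self _ _
  constructor
  · intro hc u v
    have key : ∀ q1 q2, Relation.ReflTransGen ((K.contract x).stepOn S) q1 q2 →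
        ∀ a b : K.V, Quot.mk (contractRel K x) a = q1 → Quot.mk (contractRel K x) b = q2 →
        Relation.ReflTransGen (K.stepOn T) a b := by
      intro q1 q2 h
      induction h with
      | refl =>
        intro a b h1 h2
        exact reach_mono (Finset.singleton_subset_iff.2 hxT) (mk_eq_reach (h1.trans h2.symm))
      | tail _ hst ih =>
        intro a b h1 h2
        obtain ⟨f, hf, hends⟩ := hst
        have hfT : f.1 ∈ T := Finset.mem_insert_of_mem
          (Finset.mem_map_of_mem _ hf)
        rcases hends with ⟨hs, ht⟩ | ⟨hs, ht⟩
        · have r1 : Relation.ReflTransGen (K.stepOn T) a (K.src f.1) := ih a (K.src f.1) h1 hs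
          have r2 : Relation.ReflTransGen (K.stepOn T) (K.tgt f.1) b :=
            reach_mono (Finset.singleton_subset_iff.2 hxT) (mk_eq_reach (ht.trans h2.symm))
          exact (r1.tail ⟨f.1, hfT, Or.inl ⟨rfl, rfl⟩⟩).trans r2
        · have r1 : Relation.ReflTransGen (K.stepOn T) a (K.tgt f.1) := ih a (K.tgt f.1) h1 ht
          have r2 : Relation.ReflTransGen (K.stepOn T) (K.src f.1) b :=
            reach_mono (Finset.singleton_subset_iff.2 hxT) (mk_eq_reach (hs.trans h2.symm))
          exact (r1.tail ⟨f.1, hfT, Or.inr ⟨rfl, rfl⟩⟩).trans r2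
    exact key _ _ (hc (Quot.mk _ u) (Quot.mk _ v)) u v rfl rfl
  · intro hc q1 q2
    obtain ⟨a, rfl⟩ := Quot.exists_rep q1
    obtain ⟨b, rfl⟩ := Quot.exists_rep q2
    have key : ∀ {u v : K.V}, Relation.ReflTransGen (K.stepOn T) u v →
        Relation.ReflTransGen ((K.contract x).stepOn S)
          (Quot.mk (contractRel K x) u) (Quot.mk (contractRel K x) v) := by
      intro u v h
      induction h with
      | refl => exact .refl
      | tail _ hst ih =>
        obtain ⟨f, hf, hends⟩ := hst
        rcases Finset.mem_insert.1 hf with hfx | hf'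
        · have heq : Quot.mk (contractRel K x) (K.src f) = Quot.mk (contractRel K x) (K.tgt f) := by
            subst hfx; exact Quot.sound ⟨rfl, rfl⟩
          rcases hends with ⟨rfl, rfl⟩ | ⟨rfl, rfl⟩
          · exact ih.trans (by rw [heq]; exact .refl)
          · exact ih.trans (by rw [← heq]; exact .refl)
        · rw [Finset.mem_map] at hf'
          obtain ⟨g, hg, hgval⟩ := hf'
          refine ih.tail ⟨g, hg, ?_⟩
          simp only [Function.Embedding.coe_subtype] at hgval
          rcases hends with ⟨h1, h2⟩ | ⟨h1, h2⟩
          · exact Or.inl ⟨by simp [Multigraph.contract, hgval, h1],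
              by simp [Multigraph.contract, hgval, h2]⟩
          · exact Or.inr ⟨by simp [Multigraph.contract, hgval, h1],
              by simp [Multigraph.contract, hgval, h2]⟩
    exact key (hc a b)

end Aux
section Aux2

open Relation Multigraph

variable {K : Multigraph}

lemma reach_side {A : Finset K.V} {T : Finset K.E}
    (hT : ∀ f ∈ T, (K.src f ∈ A ↔ K.tgt f ∈ A)) {u v : K.V}
    (h : Relation.ReflTransGen (K.stepOn T) u v) : u ∈ A ↔ v ∈ A := by
  induction h with
  | refl => exact Iff.rfl
  | tail _ hst ih =>
    obtain ⟨f, hf, hends⟩ := hst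
    rcases hends with ⟨rfl, rfl⟩ | ⟨rfl, rfl⟩
    · exact ih.trans (hT f hf)
    · exact ih.trans (hT f hf).symm

lemma insert_cross_conn {A : Finset K.V} {T' : Finset K.E} {x : K.E} {a b : K.V}
    (hab : (K.src x = a ∧ K.tgt x = b) ∨ (K.src x = b ∧ K.tgt x = a))
    (ha : a ∈ A) (hb : b ∉ A)
    (hT' : ∀ f ∈ T', (K.src f ∈ A ↔ K.tgt f ∈ A)) :
    K.ConnOn (insert x T') ↔
      ((∀ u ∈ A, ∀ v ∈ A, Relation.ReflTransGen (K.stepOn T') u v) ∧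
       (∀ u ∉ A, ∀ v ∉ A, Relation.ReflTransGen (K.stepOn T') u v)) := by
  constructor
  · intro hc
    have hstep : ∀ {c v : K.V}, K.stepOn (insert x T') c v →
        (K.stepOn T' c v ∨ (c = a ∧ v = b) ∨ (c = b ∧ v = a)) := by
      rintro c v ⟨f, hf, hends⟩
      rcases Finset.mem_insert.1 hf with hfx | hfT
      · subst hfx
        rcases hends with ⟨rfl, rfl⟩ | ⟨rfl, rfl⟩ <;> rcases hab with ⟨h1, h2⟩ | ⟨h1, h2⟩ <;> tauto
      · exact Or.inl ⟨f, hfT, hends⟩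
    have main : ∀ {u v : K.V}, Relation.ReflTransGen (K.stepOn (insert x T')) u v →
        (Relation.ReflTransGen (K.stepOn T') u v ∨
         (Relation.ReflTransGen (K.stepOn T') u a ∧ Relation.ReflTransGen (K.stepOn T') b v) ∨
         (Relation.ReflTransGen (K.stepOn T') u b ∧ Relation.ReflTransGen (K.stepOn T') a v)) := by
      intro u v h
      induction h with
      | refl => exact Or.inl .refl
      | tail _ hst ih =>
        rcases hstep hst with hs | ⟨rfl, rfl⟩ | ⟨rfl, rfl⟩
        · rcases ih with h0 | ⟨h1, h2⟩ | ⟨h1, h2⟩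
          · exact Or.inl (h0.tail hs)
          · exact Or.inr (Or.inl ⟨h1, h2.tail hs⟩)
          · exact Or.inr (Or.inr ⟨h1, h2.tail hs⟩)
        · rcases ih with h0 | ⟨h1, h2⟩ | ⟨h1, h2⟩
          · exact Or.inr (Or.inl ⟨h0, .refl⟩)
          · exact absurd (((reach_side hT' h2).2 ha)) hb
          · exact Or.inl h1
        · rcases ih with h0 | ⟨h1, h2⟩ | ⟨h1, h2⟩
          · exact Or.inr (Or.inr ⟨h0, .refl⟩)
          · exact Or.inl h1
          · exact absurd ((reach_side hT' h2).1 ha) hb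
    constructor
    · intro u hu v hv
      rcases main (hc u v) with h0 | ⟨h1, h2⟩ | ⟨h1, h2⟩
      · exact h0
      · exact absurd ((reach_side hT' h2).2 hv) hb
      · exact absurd ((reach_side hT' h1).1 hu) hb
    · intro u hu v hv
      rcases main (hc u v) with h0 | ⟨h1, h2⟩ | ⟨h1, h2⟩
      · exact h0
      · exact absurd ((reach_side hT' h1).2 ha) hu
      · exact absurd ((reach_side hT' h2).1 ha) hv
  · rintro ⟨hA, hB⟩ u v
    have hsub : T' ⊆ insert x T' := Finset.subset_insert _ _
    have hxmem : x ∈ insert x T' := Finset.mem_insert_self _ _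
    have stepab : K.stepOn (insert x T') a b := ⟨x, hxmem, hab⟩
    have stepba : K.stepOn (insert x T') b a := stepOn_symm stepab
    by_cases hu : u ∈ A <;> by_cases hv : v ∈ A
    · exact reach_mono hsub (hA u hu v hv)
    · exact ((reach_mono hsub (hA u hu a ha)).tail stepab).trans (reach_mono hsub (hB b hb v hv))
    · exact ((reach_mono hsub (hB u hu b hb)).tail stepba).trans (reach_mono hsub (hA a ha v hv))
    · exact reach_mono hsub (hB u hu v hv)

/-- Crossing edges of the same cut are exchangeable. -/
lemma cross_exchange {A : Finset K.V} {T' : Finset K.E} {x y : K.E}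
    (hx : (K.src x ∈ A ∧ K.tgt x ∉ A) ∨ (K.src x ∉ A ∧ K.tgt x ∈ A))
    (hy : (K.src y ∈ A ∧ K.tgt y ∉ A) ∨ (K.src y ∉ A ∧ K.tgt y ∈ A))
    (hT' : ∀ f ∈ T', (K.src f ∈ A ↔ K.tgt f ∈ A)) :
    K.ConnOn (insert x T') ↔ K.ConnOn (insert y T') := by
  have hx' : ∃ a b, ((K.src x = a ∧ K.tgt x = b) ∨ (K.src x = b ∧ K.tgt x = a)) ∧ a ∈ A ∧ b ∉ A := by
    rcases hx with ⟨h1, h2⟩ | ⟨h1, h2⟩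
    · exact ⟨_, _, Or.inl ⟨rfl, rfl⟩, h1, h2⟩
    · exact ⟨_, _, Or.inr ⟨rfl, rfl⟩, h2, h1⟩
  have hy' : ∃ a b, ((K.src y = a ∧ K.tgt y = b) ∨ (K.src y = b ∧ K.tgt y = a)) ∧ a ∈ A ∧ b ∉ A := by
    rcases hy with ⟨h1, h2⟩ | ⟨h1, h2⟩
    · exact ⟨_, _, Or.inl ⟨rfl, rfl⟩, h1, h2⟩
    · exact ⟨_, _, Or.inr ⟨rfl, rfl⟩, h2, h1⟩
  obtain ⟨a, b, hab, ha, hb⟩ := hx'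
  obtain ⟨a', b', hab', ha', hb'⟩ := hy'
  rw [insert_cross_conn hab ha hb hT', insert_cross_conn hab' ha' hb' hT']

/-- Swapping the two edges of a 2-bond preserves connectivity of edge sets. -/
lemma swap_connOn {e e' : K.E} (hne : e ≠ e') (hbond : K.IsCut {e, e'}) (T : Finset K.E) :
    K.ConnOn T ↔ K.ConnOn (T.map (Equiv.swap e e').toEmbedding) := by
  obtain ⟨A, -, -, hcutE⟩ := hbond
  have hcross : ∀ g ∈ ({e, e'} : Finset K.E),
      (K.src g ∈ A ∧ K.tgt g ∉ A) ∨ (K.src g ∉ A ∧ K.tgt g ∈ A) := by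
    intro g hg
    rw [hcutE] at hg
    exact (Finset.mem_filter.1 hg).2
  have hside : ∀ f : K.E, f ≠ e → f ≠ e' → (K.src f ∈ A ↔ K.tgt f ∈ A) := by
    intro f hfe hfe'
    by_contra hcon
    have : f ∈ K.cutEdges A := by
      rw [Multigraph.cutEdges, Finset.mem_filter]
      exact ⟨Finset.mem_univ f, by tauto⟩
    rw [← hcutE, Finset.mem_insert, Finset.mem_singleton] at this
    tauto
  have he : e ∈ ({e, e'} : Finset K.E) := Finset.mem_insert_self _ _
  have he' : e' ∈ ({e, e'} : Finset K.E) := Finset.mem_insert_of_mem (Finset.mem_singleton_self _)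
  by_cases h1 : e ∈ T <;> by_cases h2 : e' ∈ T
  · have : T.map (Equiv.swap e e').toEmbedding = T := by
      ext g
      rw [Finset.mem_map_equiv, Equiv.symm_swap]
      rcases eq_or_ne g e with rfl | hge
      · simp [Equiv.swap_apply_left, h1, h2]
      rcases eq_or_ne g e' with rfl | hge'
      · simp [Equiv.swap_apply_right, h1, h2]
      · rw [Equiv.swap_apply_of_ne_of_ne hge hge']
    rw [this]
  · -- e ∈ T, e' ∉ T
    have hT : T = insert e (T.erase e) := (Finset.insert_erase h1).symm
    have hmap : T.map (Equiv.swap e e').toEmbedding = insert e' (T.erase e) := by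
      ext g
      rw [Finset.mem_map_equiv, Equiv.symm_swap, Finset.mem_insert, Finset.mem_erase]
      rcases eq_or_ne g e with rfl | hge
      · simp [Equiv.swap_apply_left, hne, h2, hne.symm]
      rcases eq_or_ne g e' with rfl | hge'
      · simp [Equiv.swap_apply_right, h1]
      · rw [Equiv.swap_apply_of_ne_of_ne hge hge']
        simp [hge, hge']
    have hT'side : ∀ f ∈ T.erase e, (K.src f ∈ A ↔ K.tgt f ∈ A) := by
      intro f hf
      have hfe : f ≠ e := (Finset.mem_erase.1 hf).1
      have hfe' : f ≠ e' := by rintro rfl; exact h2 (Finset.mem_erase.1 hf).2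
      exact hside f hfe hfe'
    rw [hmap]
    conv_lhs => rw [hT]
    exact cross_exchange (hcross e he) (hcross e' he') hT'side
  · -- e ∉ T, e' ∈ T
    have hT : T = insert e' (T.erase e') := (Finset.insert_erase h2).symm
    have hmap : T.map (Equiv.swap e e').toEmbedding = insert e (T.erase e') := by
      ext g
      rw [Finset.mem_map_equiv, Equiv.symm_swap, Finset.mem_insert, Finset.mem_erase]
      rcases eq_or_ne g e with rfl | hge
      · simp [Equiv.swap_apply_left, h2]
      rcases eq_or_ne g e' with rfl | hge'
      · simp [Equiv.swap_apply_right, h1, hne, hne.symm]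
      · rw [Equiv.swap_apply_of_ne_of_ne hge hge']
        simp [hge, hge']
    have hT'side : ∀ f ∈ T.erase e', (K.src f ∈ A ↔ K.tgt f ∈ A) := by
      intro f hf
      have hfe' : f ≠ e' := (Finset.mem_erase.1 hf).1
      have hfe : f ≠ e := by rintro rfl; exact h1 (Finset.mem_erase.1 hf).2
      exact hside f hfe hfe'
    rw [hmap]
    conv_lhs => rw [hT]
    exact cross_exchange (hcross e' he') (hcross e he) hT'side
  · have : T.map (Equiv.swap e e').toEmbedding = T := by
      ext g
      rw [Finset.mem_map_equiv, Equiv.symm_swap]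
      rcases eq_or_ne g e with rfl | hge
      · simp [Equiv.swap_apply_left, h1, h2]
      rcases eq_or_ne g e' with rfl | hge'
      · simp [Equiv.swap_apply_right, h1, h2]
      · rw [Equiv.swap_apply_of_ne_of_ne hge hge']
    rw [this]

end Aux2
section Aux3

open Relation Multigraph

/-- Inverse of a multigraph isomorphism. -/
def MGIso.symm {K L : Multigraph} (i : MGIso K L) : MGIso L K where
  vMap := i.vMap.symm
  eMap := i.eMap.symm
  ends_eq f := by
    rcases i.ends_eq (i.eMap.symm f) with ⟨h1, h2⟩ | ⟨h1, h2⟩ <;>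
      simp only [Equiv.apply_symm_apply] at h1 h2
    · exact Or.inl ⟨by rw [h1, Equiv.symm_apply_apply], by rw [h2, Equiv.symm_apply_apply]⟩
    · exact Or.inr ⟨by rw [h2, Equiv.symm_apply_apply], by rw [h1, Equiv.symm_apply_apply]⟩

lemma shift_transfer {G G' : Multigraph} (h : IsShiftOf G G') :
    ∃ φ : G.E ≃ G'.E, ∀ S : Finset G.E, (G.ConnOn S ↔ G'.ConnOn (S.map φ.toEmbedding)) := by
  obtain ⟨K, e, e', hne, hse, hse', hbond, ⟨i1⟩, ⟨i2⟩⟩ := h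
  have hswap : ∀ a : K.E, a ≠ e' ↔ Equiv.swap e e' a ≠ e := by
    have key : ∀ a : K.E, Equiv.swap e e' a = e ↔ a = e' := by
      intro a
      rw [Equiv.swap_apply_eq_iff, Equiv.swap_apply_left]
    intro a
    exact not_congr (key a).symm
  let σ' : {f : K.E // f ≠ e'} ≃ {f : K.E // f ≠ e} := (Equiv.swap e e').subtypeEquiv hswap
  let ι1 : G.E ≃ {f : K.E // f ≠ e'} := (i1.symm).eMap
  let ι2 : {f : K.E // f ≠ e} ≃ G'.E := i2.eMap
  refine ⟨(ι1.trans σ').trans ι2, ?_⟩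
  intro S
  have step1 : G.ConnOn S ↔ (K.contract e').ConnOn (S.map ι1.toEmbedding) :=
    iso_connOn i1.symm S
  have step2 : (K.contract e').ConnOn (S.map ι1.toEmbedding) ↔
      K.ConnOn (insert e' ((S.map ι1.toEmbedding).map (Function.Embedding.subtype _))) :=
    contract_connOn e' (S.map ι1.toEmbedding)
  have step3 : K.ConnOn (insert e' ((S.map ι1.toEmbedding).map (Function.Embedding.subtype _))) ↔
      K.ConnOn ((insert e' ((S.map ι1.toEmbedding).map (Function.Embedding.subtype _))).map
        (Equiv.swap e e').toEmbedding) :=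
    swap_connOn hne hbond.1 _
  have hset : (insert e' ((S.map ι1.toEmbedding).map (Function.Embedding.subtype _))).map
        (Equiv.swap e e').toEmbedding =
      insert e (((S.map ι1.toEmbedding).map σ'.toEmbedding).map (Function.Embedding.subtype _)) := by
    rw [Finset.map_insert, Equiv.toEmbedding_apply, Equiv.swap_apply_right]
    congr 1
    simp only [Finset.map_map]
    rfl
  have step4 : (K.contract e).ConnOn ((S.map ι1.toEmbedding).map σ'.toEmbedding) ↔
      K.ConnOn (insert e (((S.map ι1.toEmbedding).map σ'.toEmbedding).map
        (Function.Embedding.subtype _))) :=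
    contract_connOn e _
  have step5 : (K.contract e).ConnOn ((S.map ι1.toEmbedding).map σ'.toEmbedding) ↔
      G'.ConnOn (((S.map ι1.toEmbedding).map σ'.toEmbedding).map ι2.toEmbedding) :=
    iso_connOn i2 _
  have hfinal : ((S.map ι1.toEmbedding).map σ'.toEmbedding).map ι2.toEmbedding =
      S.map ((ι1.trans σ').trans ι2).toEmbedding := by
    simp only [Finset.map_map]
    rfl
  rw [step1, step2, step3, hset, ← step4, step5, hfinal]

lemma equiv_transfer {G H : Multigraph} (h : EquivalentGraphs G H) :
    ∃ φ : G.E ≃ H.E, ∀ S : Finset G.E, (G.ConnOn S ↔ H.ConnOn (S.map φ.toEmbedding)) := by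
  induction h with
  | refl => exact ⟨Equiv.refl _, by simp⟩
  | tail _ hshift ih =>
    obtain ⟨φ, hφ⟩ := ih
    obtain ⟨ψ, hψ⟩ := shift_transfer hshift
    refine ⟨φ.trans ψ, fun S => ?_⟩
    rw [hφ S, hψ (S.map φ.toEmbedding), Finset.map_map]
    rfl

lemma map_univ_sdiff {α β : Type} [Fintype α] [Fintype β] [DecidableEq α] [DecidableEq β]
    (φ : α ≃ β) (F : Finset α) :
    (Finset.univ \ F).map φ.toEmbedding = Finset.univ \ F.map φ.toEmbedding := by
  ext g
  simp [Finset.mem_map_equiv, Finset.mem_sdiff]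

end Aux3
lemma map_symm_map {α β : Type} (φ : α ≃ β) (F : Finset β) :
    (F.map φ.symm.toEmbedding).map φ.toEmbedding = F := by
  ext g
  simp [Finset.mem_map_equiv]

/-- equivalent graphs (related by repeated edge shifting) have the same
numbers of i-disconnections for all 1 ≤ i ≤ m, hence the same reliability function. -/
theorem equivalent_graphs_same_reliability (G H : Multigraph) (m : ℕ)
    (hGm : G.nE = m) (hHm : H.nE = m) (heq : EquivalentGraphs G H) :
    (∀ i : ℕ, 1 ≤ i → i ≤ m → G.d i = H.d i) ∧
    (∀ p : ℝ, 0 < p → p < 1 → G.rel p = H.rel p) := by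
  obtain ⟨φ, hφ⟩ := equiv_transfer heq
  have hnE : G.nE = H.nE := Fintype.card_congr φ
  have hdis : ∀ F : Finset G.E, (G.Disconnects F ↔ H.Disconnects (F.map φ.toEmbedding)) := by
    intro F
    rw [Multigraph.Disconnects, Multigraph.Disconnects, ← map_univ_sdiff]
    exact not_congr (hφ _)
  have hd : ∀ i : ℕ, G.d i = H.d i := by
    intro i
    rw [Multigraph.d, Multigraph.d]
    apply Finset.card_bij (fun F _ => F.map φ.toEmbedding)
    · intro F hF
      simp only [Finset.mem_filter, Finset.mem_univ, true_and] at hF ⊢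
      exact ⟨by rw [Finset.card_map]; exact hF.1, (hdis F).1 hF.2⟩
    · intro F1 _ F2 _ hFe
      exact Finset.map_injective _ hFe
    · intro F' hF'
      simp only [Finset.mem_filter, Finset.mem_univ, true_and] at hF'
      refine ⟨F'.map φ.symm.toEmbedding, ?_, map_symm_map φ F'⟩
      simp only [Finset.mem_filter, Finset.mem_univ, true_and]
      constructor
      · rw [Finset.card_map]; exact hF'.1
      · rw [hdis, map_symm_map φ F']
        exact hF'.2
  have hrel : ∀ p : ℝ, G.rel p = H.rel p := by
    intro p
    rw [Multigraph.rel, Multigraph.rel]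
    apply Fintype.sum_equiv φ.finsetCongr
    intro S
    simp only [Equiv.finsetCongr_apply, Finset.card_map, hnE, hφ S]
  exact ⟨fun i _ _ => hd i, fun p _ _ => hrel p⟩
end
end

section
/- Let G be a connected graph and let G′ be obtained from G by moving an edge e, i.e. contracting e and then expanding a new edge, identified with e, at an arbitrarily chosen vertex. Then an edge set E disconnects G but not G′ if and only if both of the following hold: (1) in G, the set E contains exactly one bond B, and e ∈ B; (2) in G′, there is no bond that contains e and is contained in E. -/
open Classical Finset

noncomputable section

/- ------------------- auxiliary lemmas ------------------- -/

open scoped symmDiff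

lemma mem_cutEdges (G : Multigraph) (A : Finset G.V) (f : G.E) :
    f ∈ G.cutEdges A ↔
      ((G.src f ∈ A ∧ G.tgt f ∉ A) ∨ (G.src f ∉ A ∧ G.tgt f ∈ A)) := by
  simp [Multigraph.cutEdges]

lemma disconnects_mono (G : Multigraph) {F F' : Finset G.E} (h : F ⊆ F')
    (hd : G.Disconnects F) : G.Disconnects F' := by
  intro hc
  apply hd
  intro u v
  refine Relation.ReflTransGen.mono ?_ _ _ (hc u v)
  rintro a b ⟨f, hf, hor⟩
  refine ⟨f, ?_, hor⟩
  rw [Finset.mem_sdiff] at hf ⊢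
  exact ⟨hf.1, fun hx => hf.2 (h hx)⟩

lemma cut_disconnects (G : Multigraph) (A : Finset G.V) (hne : A.Nonempty)
    (hnu : A ≠ Finset.univ) : G.Disconnects (G.cutEdges A) := by
  obtain ⟨a, ha⟩ := hne
  obtain ⟨b, hb⟩ : ∃ b, b ∉ A := by
    by_contra h; push_neg at h; exact hnu (Finset.eq_univ_iff_forall.mpr h)
  intro hc
  have key : ∀ u v, Relation.ReflTransGen (G.stepOn (Finset.univ \ G.cutEdges A)) u v →
      (u ∈ A → v ∈ A) := by
    intro u v h
    induction h with
    | refl => exact id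
    | @tail w x h hstep ih =>
      intro hu
      obtain ⟨f, hf, hor⟩ := hstep
      have hf' : f ∉ G.cutEdges A := (Finset.mem_sdiff.mp hf).2
      rw [mem_cutEdges] at hf'
      have hw := ih hu
      rcases hor with ⟨hs, ht⟩ | ⟨hs, ht⟩ <;> subst hs <;> subst ht <;> tauto
  exact hb (key a b (hc a b) ha)

lemma disconnects_cut (G : Multigraph) {F : Finset G.E} (h : G.Disconnects F) :
    ∃ A : Finset G.V, A.Nonempty ∧ A ≠ Finset.univ ∧ G.cutEdges A ⊆ F := by
  rw [Multigraph.Disconnects, Multigraph.ConnOn] at h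
  push_neg at h
  obtain ⟨u, v, huv⟩ := h
  refine ⟨Finset.univ.filter fun x => Relation.ReflTransGen (G.stepOn (Finset.univ \ F)) u x,
    ⟨u, Finset.mem_filter.mpr ⟨Finset.mem_univ u, Relation.ReflTransGen.refl⟩⟩, ?_, ?_⟩
  · intro heq
    have hv : v ∈ Finset.univ.filter
        fun x => Relation.ReflTransGen (G.stepOn (Finset.univ \ F)) u x := by
      rw [heq]; exact Finset.mem_univ v
    exact huv ((Finset.mem_filter.mp hv).2)
  · intro f hf
    rw [mem_cutEdges] at hf
    by_contra hfF
    have hstep : G.stepOn (Finset.univ \ F) (G.src f) (G.tgt f) :=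
      ⟨f, Finset.mem_sdiff.mpr ⟨Finset.mem_univ f, hfF⟩, Or.inl ⟨rfl, rfl⟩⟩
    have hstep' : G.stepOn (Finset.univ \ F) (G.tgt f) (G.src f) :=
      ⟨f, Finset.mem_sdiff.mpr ⟨Finset.mem_univ f, hfF⟩, Or.inr ⟨rfl, rfl⟩⟩
    rcases hf with ⟨h1, h2⟩ | ⟨h1, h2⟩
    · rw [Finset.mem_filter] at h1 h2
      exact h2 ⟨Finset.mem_univ _, (h1.2).tail hstep⟩
    · rw [Finset.mem_filter] at h1 h2
      exact h1 ⟨Finset.mem_univ _, (h2.2).tail hstep'⟩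

lemma exists_bond_subset (G : Multigraph) {F : Finset G.E}
    (h : ∃ A : Finset G.V, A.Nonempty ∧ A ≠ Finset.univ ∧ G.cutEdges A ⊆ F) :
    ∃ B ⊆ F, G.IsBond B := by
  obtain ⟨A, h1, h2, h3⟩ := h
  have hSne : (F.powerset.filter fun C => G.IsCut C).Nonempty :=
    ⟨G.cutEdges A, Finset.mem_filter.mpr ⟨Finset.mem_powerset.mpr h3, ⟨A, h1, h2, rfl⟩⟩⟩
  obtain ⟨B, hBS, hmin⟩ := Finset.exists_min_image _ Finset.card hSne
  rw [Finset.mem_filter, Finset.mem_powerset] at hBS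
  refine ⟨B, hBS.1, hBS.2, ?_⟩
  intro C hCB hC
  have hCS : C ∈ F.powerset.filter fun C => G.IsCut C :=
    Finset.mem_filter.mpr ⟨Finset.mem_powerset.mpr (hCB.trans hBS.1), hC⟩
  exact Finset.eq_of_subset_of_card_le hCB (hmin C hCS)

lemma cutEdges_symmDiff (G : Multigraph) (A1 A2 : Finset G.V) :
    G.cutEdges (A1 ∆ A2) = G.cutEdges A1 ∆ G.cutEdges A2 := by
  ext f
  rw [Finset.mem_symmDiff, mem_cutEdges, mem_cutEdges, mem_cutEdges]
  simp only [Finset.mem_symmDiff]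
  tauto

lemma cutEdges_empty (G : Multigraph) : G.cutEdges (∅ : Finset G.V) = ∅ := by
  ext f; rw [mem_cutEdges]; simp

lemma cutEdges_univ (G : Multigraph) : G.cutEdges (Finset.univ : Finset G.V) = ∅ := by
  ext f; rw [mem_cutEdges]; simp

lemma isCut_symmDiff (G : Multigraph) {C1 C2 : Finset G.E}
    (h1 : G.IsCut C1) (h2 : G.IsCut C2) (hne : C1 ≠ C2) : G.IsCut (C1 ∆ C2) := by
  obtain ⟨A1, hA1ne, hA1u, rfl⟩ := h1
  obtain ⟨A2, hA2ne, hA2u, rfl⟩ := h2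
  have hA : (A1 ∆ A2).Nonempty := by
    rw [Finset.nonempty_iff_ne_empty]
    intro h
    apply hne
    have heq := cutEdges_symmDiff G A1 A2
    rw [h, cutEdges_empty] at heq
    have : G.cutEdges A1 ∆ G.cutEdges A2 = ⊥ := by
      rw [Finset.bot_eq_empty]; exact heq.symm
    exact symmDiff_eq_bot.mp this
  have hAu : A1 ∆ A2 ≠ Finset.univ := by
    intro h
    apply hne
    have heq := cutEdges_symmDiff G A1 A2
    rw [h, cutEdges_univ] at heq
    have : G.cutEdges A1 ∆ G.cutEdges A2 = ⊥ := by
      rw [Finset.bot_eq_empty]; exact heq.symm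
    exact symmDiff_eq_bot.mp this
  exact ⟨A1 ∆ A2, hA, hAu, (cutEdges_symmDiff G A1 A2).symm⟩

/-- Transfer of a cut avoiding the moved edge across a `MovedEdge` situation. -/
lemma transfer_aux (G G' : Multigraph) (φ : G.E ≃ G'.E) (e : G.E) (e' : G'.E)
    (hee' : φ e = e')
    (ψ : Quot (contractRel G e) → Quot (contractRel G' e'))
    (ψ' : Quot (contractRel G' e') → Quot (contractRel G e))
    (hinv : ∀ x, ψ' (ψ x) = x)
    (hψ : ∀ f : G.E, f ≠ e →
      (ψ (Quot.mk _ (G.src f)) = Quot.mk _ (G'.src (φ f)) ∧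
       ψ (Quot.mk _ (G.tgt f)) = Quot.mk _ (G'.tgt (φ f))) ∨
      (ψ (Quot.mk _ (G.src f)) = Quot.mk _ (G'.tgt (φ f)) ∧
       ψ (Quot.mk _ (G.tgt f)) = Quot.mk _ (G'.src (φ f))))
    (A : Finset G.V) (hne : A.Nonempty) (hnu : A ≠ Finset.univ)
    (hcross : e ∉ G.cutEdges A) :
    ∃ A' : Finset G'.V, A'.Nonempty ∧ A' ≠ Finset.univ ∧
      G'.cutEdges A' = (G.cutEdges A).image φ := by
  have hiff : (G.src e ∈ A ↔ G.tgt e ∈ A) := by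
    rw [mem_cutEdges] at hcross; tauto
  let Abar : Quot (contractRel G e) → Prop :=
    Quot.lift (fun v => v ∈ A) (by
      rintro u v ⟨hu, hv⟩
      subst hu; subst hv
      exact propext hiff)
  let A' : Finset G'.V := Finset.univ.filter fun v' => Abar (ψ' (Quot.mk _ v'))
  have hmemA' : ∀ v' : G'.V, v' ∈ A' ↔ Abar (ψ' (Quot.mk _ v')) := by
    intro v'; simp [A']
  have hedge : ∀ f : G.E, f ≠ e →
      ((G'.src (φ f) ∈ A' ↔ G.src f ∈ A) ∧ (G'.tgt (φ f) ∈ A' ↔ G.tgt f ∈ A)) ∨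
      ((G'.src (φ f) ∈ A' ↔ G.tgt f ∈ A) ∧ (G'.tgt (φ f) ∈ A' ↔ G.src f ∈ A)) := by
    intro f hf
    rcases hψ f hf with ⟨hs, ht⟩ | ⟨hs, ht⟩
    · left
      constructor
      · rw [hmemA', ← hs, hinv]
      · rw [hmemA', ← ht, hinv]
    · right
      constructor
      · rw [hmemA', ← ht, hinv]
      · rw [hmemA', ← hs, hinv]
  refine ⟨A', ?_, ?_, ?_⟩
  · obtain ⟨a, ha⟩ := hne
    obtain ⟨va, hva⟩ := Quot.exists_rep (ψ (Quot.mk _ a))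
    refine ⟨va, (hmemA' va).mpr ?_⟩
    rw [hva, hinv]
    exact ha
  · obtain ⟨b, hb⟩ : ∃ b, b ∉ A := by
      by_contra h; push_neg at h; exact hnu (Finset.eq_univ_iff_forall.mpr h)
    obtain ⟨vb, hvb⟩ := Quot.exists_rep (ψ (Quot.mk _ b))
    intro h
    apply hb
    have : vb ∈ A' := by rw [h]; exact Finset.mem_univ vb
    rw [hmemA', hvb, hinv] at this
    exact this
  · ext f'
    rw [mem_cutEdges]
    by_cases hf' : f' = e'
    · rw [hf']
      have hsame : G'.src e' ∈ A' ↔ G'.tgt e' ∈ A' := by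
        rw [hmemA', hmemA']
        have hq : (Quot.mk (contractRel G' e') (G'.src e')) = Quot.mk _ (G'.tgt e') :=
          Quot.sound ⟨rfl, rfl⟩
        rw [hq]
      have himg : e' ∉ (G.cutEdges A).image φ := by
        intro h
        obtain ⟨g, hg, hge⟩ := Finset.mem_image.mp h
        have : g = e := φ.injective (by rw [hge, hee'])
        subst this
        exact hcross hg
      constructor
      · rintro (⟨hx1, hx2⟩ | ⟨hx1, hx2⟩)
        · exact absurd (hsame.mp hx1) hx2
        · exact absurd (hsame.mpr hx2) hx1
      · intro h; exact absurd h himg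
    · have hφf : φ (φ.symm f') = f' := φ.apply_symm_apply f'
      have hfe : φ.symm f' ≠ e := by
        intro h; apply hf'; rw [← hφf, h, hee']
      have hiffcross :
          ((G'.src f' ∈ A' ∧ G'.tgt f' ∉ A') ∨ (G'.src f' ∉ A' ∧ G'.tgt f' ∈ A')) ↔
            φ.symm f' ∈ G.cutEdges A := by
        rw [mem_cutEdges]
        rcases hedge (φ.symm f') hfe with ⟨hs, ht⟩ | ⟨hs, ht⟩ <;>
          rw [hφf] at hs ht <;> rw [hs, ht] <;> tauto
      rw [hiffcross]
      constructor
      · intro h; exact Finset.mem_image.mpr ⟨φ.symm f', h, hφf⟩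
      · intro h
        obtain ⟨g, hg, hgf⟩ := Finset.mem_image.mp h
        have hgeq : g = φ.symm f' := by rw [← hgf, Equiv.symm_apply_apply]
        rw [← hgeq]; exact hg

/-- if G' is obtained from the connected graph G by moving the edge e,
then an edge set E disconnects G but not G' iff (1) E contains exactly one bond B of G
and e ∈ B, and (2) no bond of G' containing e is contained in E. -/
theorem moved_edge_disconnection_criterion (G G' : Multigraph) (hG : G.Connected)
    (φ : G.E ≃ G'.E) (e : G.E) (hmove : MovedEdge G G' φ e) (E : Finset G.E) :
    (G.Disconnects E ∧ ¬ G'.Disconnects (E.image φ)) ↔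
      ((∃ B ⊆ E, G.IsBond B ∧ e ∈ B ∧
          ∀ B' ⊆ E, G.IsBond B' → B' = B) ∧
       ¬ ∃ B' ⊆ E.image φ, G'.IsBond B' ∧ φ e ∈ B') := by
  obtain ⟨hse, hse', ψ, hψ⟩ := hmove
  -- forward transfer: cuts of G avoiding e give cuts of G'
  have fwd : ∀ C : Finset G.E, G.IsCut C → e ∉ C → G'.IsCut (C.image φ) := by
    rintro C ⟨A, hA1, hA2, rfl⟩ heC
    obtain ⟨A', h1', h2', h3'⟩ :=
      transfer_aux G G' φ e (φ e) rfl ψ ψ.symm ψ.symm_apply_apply hψ A hA1 hA2 heC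
    exact ⟨A', h1', h2', h3'.symm⟩
  -- backward transfer: cuts of G' avoiding φ e give cuts of G
  have bwd : ∀ C' : Finset G'.E, G'.IsCut C' → φ e ∉ C' → G.IsCut (C'.image φ.symm) := by
    rintro C' ⟨A', hA1, hA2, rfl⟩ heC'
    have hψ' : ∀ f' : G'.E, f' ≠ φ e →
        (ψ.symm (Quot.mk _ (G'.src f')) = Quot.mk _ (G.src (φ.symm f')) ∧
         ψ.symm (Quot.mk _ (G'.tgt f')) = Quot.mk _ (G.tgt (φ.symm f'))) ∨
        (ψ.symm (Quot.mk _ (G'.src f')) = Quot.mk _ (G.tgt (φ.symm f')) ∧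
         ψ.symm (Quot.mk _ (G'.tgt f')) = Quot.mk _ (G.src (φ.symm f'))) := by
      intro f' hf'
      have hfe : φ.symm f' ≠ e := by
        intro h
        apply hf'
        rw [← φ.apply_symm_apply f', h]
      rcases hψ (φ.symm f') hfe with ⟨hs, ht⟩ | ⟨hs, ht⟩ <;>
        rw [φ.apply_symm_apply] at hs ht
      · left
        constructor
        · rw [Equiv.symm_apply_eq]; exact hs.symm
        · rw [Equiv.symm_apply_eq]; exact ht.symm
      · right
        constructor
        · rw [Equiv.symm_apply_eq]; exact ht.symm
        · rw [Equiv.symm_apply_eq]; exact hs.symm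
    obtain ⟨A, h1, h2, h3⟩ :=
      transfer_aux G' G φ.symm (φ e) e (Equiv.symm_apply_apply φ e) ψ.symm ψ
        ψ.apply_symm_apply hψ' A' hA1 hA2 heC'
    exact ⟨A, h1, h2, h3.symm⟩
  -- a superset of a cut disconnects
  have disc_of_cut : ∀ (H : Multigraph) (F B : Finset H.E), B ⊆ F → H.IsCut B →
      H.Disconnects F := by
    rintro H F B hBF ⟨A, hA1, hA2, rfl⟩
    exact disconnects_mono H hBF (cut_disconnects H A hA1 hA2)
  have bond_of_disc : ∀ (H : Multigraph) (F : Finset H.E), H.Disconnects F →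
      ∃ B ⊆ F, H.IsBond B := fun H F h => exists_bond_subset H (disconnects_cut H h)
  constructor
  · rintro ⟨hdisc, hndisc'⟩
    have hbonde : ∀ B ⊆ E, G.IsCut B → e ∈ B := by
      intro B hBE hB
      by_contra heB
      exact hndisc' (disc_of_cut G' (E.image φ) (B.image φ)
        (Finset.image_subset_image hBE) (fwd B hB heB))
    obtain ⟨B, hBE, hB⟩ := bond_of_disc G E hdisc
    refine ⟨⟨B, hBE, hB, hbonde B hBE hB.1, ?_⟩, ?_⟩
    · intro B' hB'E hB'
      by_contra hne
      have heB' := hbonde B' hB'E hB'.1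
      have heB := hbonde B hBE hB.1
      have hcutsd : G.IsCut (B' ∆ B) := isCut_symmDiff G hB'.1 hB.1 hne
      have hesd : e ∈ B' ∆ B := hbonde (B' ∆ B) (fun x hx => by
        rcases Finset.mem_symmDiff.mp hx with ⟨h, _⟩ | ⟨h, _⟩
        exacts [hB'E h, hBE h]) hcutsd
      rcases Finset.mem_symmDiff.mp hesd with ⟨_, h⟩ | ⟨_, h⟩
      exacts [h heB, h heB']
    · rintro ⟨B', hB'sub, hB'bond, _⟩
      exact hndisc' (disc_of_cut G' _ B' hB'sub hB'bond.1)
  · rintro ⟨⟨B, hBE, hB, heB, huniq⟩, hnone⟩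
    refine ⟨disc_of_cut G E B hBE hB.1, ?_⟩
    intro hdisc'
    obtain ⟨B', hB'sub, hB'⟩ := bond_of_disc G' (E.image φ) hdisc'
    have hφe : φ e ∉ B' := fun h => hnone ⟨B', hB'sub, hB', h⟩
    have hcutG := bwd B' hB'.1 hφe
    have hsubE : B'.image φ.symm ⊆ E := by
      intro x hx
      obtain ⟨y, hy, hxy⟩ := Finset.mem_image.mp hx
      obtain ⟨z, hz, hzy⟩ := Finset.mem_image.mp (hB'sub hy)
      have : x = z := by rw [← hxy, ← hzy, Equiv.symm_apply_apply]
      rw [this]; exact hz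
    have heC : e ∉ B'.image φ.symm := by
      intro h
      obtain ⟨y, hy, hxy⟩ := Finset.mem_image.mp h
      apply hφe
      have : φ e = y := by rw [← hxy, Equiv.apply_symm_apply]
      rw [this]; exact hy
    obtain ⟨A, hA1, hA2, hA3⟩ := hcutG
    obtain ⟨B2, hB2sub, hB2⟩ :=
      exists_bond_subset G ⟨A, hA1, hA2, by rw [← hA3]⟩
    have : B2 = B := huniq B2 (hB2sub.trans hsubE) hB2
    rw [this] at hB2sub
    exact heC (hB2sub heB)
end
end
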